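/- arXiv:1404.7340 — 7 statements merged into one kernel-verified Lean document; each statement's English description precedes it below -/
import Mathlib

section
/- Let F : C₁ → C₂ be a functor, let (L₁, l₁) be a localization on C₁ and (L₂, l₂) a localization on C₂. Then F preserves equivalences if and only if there is a natural transformation α : F ∘ L₁ → L₂ ∘ F such that α_X ∘ F((l₁)_X) = (l₂)_{FX} for every object X and each α_X is an L₂-equivalence. When this holds, such α is unique, and α is a natural isomorphism if and only if F preserves local objects. -/
open CategoryTheory

/-- A localization (reflection) on a category `C`: a functor `L : C ⥤ C` with a natural
transformation `l : 𝟭 C ⟶ L` such that `L (l X) = l (L X)` and these morphisms are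
isomorphisms. -/
structure LocalizationData (C : Type*) [Category C] where
  /-- the localization functor -/
  L : C ⥤ C
  /-- the unit -/
  l : 𝟭 C ⟶ L
  coincide : ∀ X : C, L.map (l.app X) = l.app (L.obj X)
  isIso : ∀ X : C, IsIso (L.map (l.app X))

/-- An object `X` is `L`-local if `l X : X ⟶ L X` is an isomorphism. -/
def LocalizationData.IsLocal {C : Type*} [Category C] (Λ : LocalizationData C) (X : C) : Prop :=
  IsIso (Λ.l.app X)

/-- A morphism `g` is an `L`-equivalence if `L g` is an isomorphism. -/
def LocalizationData.IsEquiv {C : Type*} [Category C] (Λ : LocalizationData C)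
    {X Y : C} (g : X ⟶ Y) : Prop :=
  IsIso (Λ.L.map g)

namespace LocalizationData

variable {C : Type*} [Category C] (Λ : LocalizationData C)

/-- `L X` is always local. -/
lemma isLocal_L_obj (X : C) : Λ.IsLocal (Λ.L.obj X) := by
  rw [IsLocal, ← Λ.coincide]
  exact Λ.isIso X

/-- A morphism into a local object through an `L`-equivalence is determined by the
composite. -/
lemma hom_ext {A B Z : C} {g : A ⟶ B} (hg : Λ.IsEquiv g) (hZ : Λ.IsLocal Z)
    {h h' : B ⟶ Z} (hyp : g ≫ h = g ≫ h') : h = h' := by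
  haveI : IsIso (Λ.L.map g) := hg
  haveI : IsIso (Λ.l.app Z) := hZ
  have hL : Λ.L.map h = Λ.L.map h' := by
    have := congrArg Λ.L.map hyp
    simp only [Functor.map_comp] at this
    exact (cancel_epi (Λ.L.map g)).mp this
  have nat : ∀ k : B ⟶ Z, k = Λ.l.app B ≫ Λ.L.map k ≫ inv (Λ.l.app Z) := by
    intro k
    have := Λ.l.naturality k
    simp only [Functor.id_map] at this
    rw [← Category.assoc, ← this]
    simp
  rw [nat h, nat h', hL]

/-- An `L`-equivalence between local objects is an isomorphism. -/
lemma isIso_of_isEquiv_of_isLocal {A B : C} {g : A ⟶ B} (hg : Λ.IsEquiv g)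
    (hA : Λ.IsLocal A) (hB : Λ.IsLocal B) : IsIso g := by
  haveI : IsIso (Λ.L.map g) := hg
  haveI : IsIso (Λ.l.app A) := hA
  haveI : IsIso (Λ.l.app B) := hB
  have e : g = Λ.l.app A ≫ Λ.L.map g ≫ inv (Λ.l.app B) := by
    have := Λ.l.naturality g
    simp only [Functor.id_map] at this
    rw [← Category.assoc, ← this]
    simp
  rw [e]
  infer_instance

end LocalizationData

section Aux

variable {C₁ C₂ : Type*} [Category C₁] [Category C₂] (F : C₁ ⥤ C₂)
  (Λ₁ : LocalizationData C₁) (Λ₂ : LocalizationData C₂)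

/-- If `α` satisfies the comparison conditions, then `F (l₁ X)` is an `L₂`-equivalence. -/
lemma aux_isEquiv_map_l (α : Λ₁.L ⋙ F ⟶ F ⋙ Λ₂.L)
    (htri : ∀ X : C₁, F.map (Λ₁.l.app X) ≫ α.app X = Λ₂.l.app (F.obj X))
    (heq : ∀ X : C₁, Λ₂.IsEquiv (α.app X)) (X : C₁) :
    Λ₂.IsEquiv (F.map (Λ₁.l.app X)) := by
  haveI : IsIso (Λ₂.L.map (α.app X)) := heq X
  have := congrArg Λ₂.L.map (htri X)
  simp only [Functor.map_comp] at this
  haveI : IsIso (Λ₂.L.map (F.map (Λ₁.l.app X)) ≫ Λ₂.L.map (α.app X)) := by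
    rw [this]; exact Λ₂.isIso (F.obj X)
  exact IsIso.of_isIso_comp_right (Λ₂.L.map (F.map (Λ₁.l.app X))) (Λ₂.L.map (α.app X))

end Aux

/-- `F` preserves equivalences iff there is a natural transformation
`α : F ∘ L₁ ⟶ L₂ ∘ F` with `α_X ∘ F((l₁)_X) = (l₂)_{F X}` whose components are
`L₂`-equivalences; such `α` is unique, and it is an isomorphism iff `F` preserves
local objects. -/
theorem preserves_equiv_iff_exists_comparison_alpha
    {C₁ C₂ : Type*} [Category C₁] [Category C₂] (F : C₁ ⥤ C₂)
    (Λ₁ : LocalizationData C₁) (Λ₂ : LocalizationData C₂) :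
    ((∀ ⦃X Y : C₁⦄ (f : X ⟶ Y), Λ₁.IsEquiv f → Λ₂.IsEquiv (F.map f)) ↔
      ∃ α : Λ₁.L ⋙ F ⟶ F ⋙ Λ₂.L,
        (∀ X : C₁, F.map (Λ₁.l.app X) ≫ α.app X = Λ₂.l.app (F.obj X)) ∧
        ∀ X : C₁, Λ₂.IsEquiv (α.app X)) ∧
    (∀ α α' : Λ₁.L ⋙ F ⟶ F ⋙ Λ₂.L,
      ((∀ X : C₁, F.map (Λ₁.l.app X) ≫ α.app X = Λ₂.l.app (F.obj X)) ∧
        ∀ X : C₁, Λ₂.IsEquiv (α.app X)) →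
      ((∀ X : C₁, F.map (Λ₁.l.app X) ≫ α'.app X = Λ₂.l.app (F.obj X)) ∧
        ∀ X : C₁, Λ₂.IsEquiv (α'.app X)) → α = α') ∧
    (∀ α : Λ₁.L ⋙ F ⟶ F ⋙ Λ₂.L,
      ((∀ X : C₁, F.map (Λ₁.l.app X) ≫ α.app X = Λ₂.l.app (F.obj X)) ∧
        ∀ X : C₁, Λ₂.IsEquiv (α.app X)) →
      (IsIso α ↔ ∀ X : C₁, Λ₁.IsLocal X → Λ₂.IsLocal (F.obj X))) := by
  refine ⟨⟨fun hF => ?_, fun ⟨α, htri, heq⟩ => ?_⟩, fun α α' hα hα' => ?_, fun α ⟨htri, heq⟩ => ?_⟩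
  · -- construct α from preservation of equivalences
    have hinv : ∀ X : C₁, IsIso (Λ₂.L.map (F.map (Λ₁.l.app X))) :=
      fun X => hF (Λ₁.l.app X) (Λ₁.isIso X)
    refine ⟨⟨fun X => Λ₂.l.app (F.obj (Λ₁.L.obj X)) ≫ inv (Λ₂.L.map (F.map (Λ₁.l.app X))),
      fun X Y f => ?_⟩, fun X => ?_, fun X => ?_⟩
    · -- naturality
      dsimp
      have n2 := Λ₂.l.naturality (F.map (Λ₁.L.map f))
      simp only [Functor.id_map] at n2
      rw [← Category.assoc, n2, Category.assoc, Category.assoc]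
      congr 1
      rw [IsIso.eq_inv_comp, ← Category.assoc, IsIso.comp_inv_eq]
      have n1 := Λ₁.l.naturality f
      simp only [Functor.id_map] at n1
      have := congrArg (fun g => Λ₂.L.map (F.map g)) n1
      simp only [Functor.map_comp] at this
      exact this.symm
    · -- triangle
      have n2 := Λ₂.l.naturality (F.map (Λ₁.l.app X))
      simp only [Functor.id_map] at n2
      rw [← Category.assoc, n2]
      simp
    · -- components are equivalences
      rw [LocalizationData.IsEquiv, Functor.map_comp]
      haveI := Λ₂.isIso (F.obj (Λ₁.L.obj X))
      infer_instance
  · -- existence of α implies preservation of equivalences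
    intro X Y f hf
    haveI : IsIso (Λ₁.L.map f) := hf
    haveI hX : IsIso (Λ₂.L.map (F.map (Λ₁.l.app X))) :=
      aux_isEquiv_map_l F Λ₁ Λ₂ α htri heq X
    haveI hY : IsIso (Λ₂.L.map (F.map (Λ₁.l.app Y))) :=
      aux_isEquiv_map_l F Λ₁ Λ₂ α htri heq Y
    have n1 := Λ₁.l.naturality f
    simp only [Functor.id_map] at n1
    have key := congrArg (fun g => Λ₂.L.map (F.map g)) n1
    simp only [Functor.map_comp] at key
    haveI : IsIso (Λ₂.L.map (F.map f) ≫ Λ₂.L.map (F.map (Λ₁.l.app Y))) := by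
      rw [key]; infer_instance
    exact IsIso.of_isIso_comp_right (Λ₂.L.map (F.map f)) (Λ₂.L.map (F.map (Λ₁.l.app Y)))
  · -- uniqueness
    obtain ⟨htri, heq⟩ := hα
    obtain ⟨htri', _⟩ := hα'
    ext X
    refine Λ₂.hom_ext (aux_isEquiv_map_l F Λ₁ Λ₂ α htri heq X)
      (Λ₂.isLocal_L_obj (F.obj X)) ?_
    rw [htri X, htri' X]
  · -- iso iff preserves local
    constructor
    · intro hiso X hX
      haveI : IsIso (Λ₁.l.app X) := hX
      haveI : IsIso (α.app X) := inferInstance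
      rw [LocalizationData.IsLocal, ← htri X]
      infer_instance
    · intro hloc
      haveI : ∀ X : C₁, IsIso (α.app X) := fun X =>
        Λ₂.isIso_of_isEquiv_of_isLocal (heq X)
          (hloc (Λ₁.L.obj X) (Λ₁.isLocal_L_obj X)) (Λ₂.isLocal_L_obj (F.obj X))
      exact NatIso.isIso_of_isIso_app α
end

section
/- Let (T, η, μ) be a monad on a category C and let (L, l) be a localization on C. If T preserves L-equivalences (i.e. Tg is an L-equivalence whenever g is an L-equivalence), then for every T-algebra (X, a) there is a unique morphism ã : T(LX) → LX such that (LX, ã) is a T-algebra and l_X : (X, a) → (LX, ã) is a morphism of T-algebras. -/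
open CategoryTheory

namespace LocalizationData

variable {C : Type*} [Category C] (Λ : LocalizationData C)

/-- Cancellation: if `Z` is local and `g` is an `L`-equivalence, precomposition with `g`
is injective on morphisms into `Z`. -/
lemma cancel_of_isEquiv {A B Z : C} (hZ : IsIso (Λ.l.app Z)) (g : A ⟶ B)
    (hg : IsIso (Λ.L.map g)) {h₁ h₂ : B ⟶ Z} (e : g ≫ h₁ = g ≫ h₂) : h₁ = h₂ := by
  have hL : Λ.L.map h₁ = Λ.L.map h₂ := by
    have := congrArg Λ.L.map e
    simp only [Functor.map_comp] at this
    exact (cancel_epi (Λ.L.map g)).mp this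
  have n₁ := Λ.l.naturality h₁
  have n₂ := Λ.l.naturality h₂
  simp only [Functor.id_map] at n₁ n₂
  have : h₁ ≫ Λ.l.app Z = h₂ ≫ Λ.l.app Z := by rw [n₁, n₂, hL]
  exact (cancel_mono (Λ.l.app Z)).mp this

/-- Lifting: if `Z` is local and `g : A ⟶ B` is an `L`-equivalence, any `f : A ⟶ Z`
extends uniquely along `g`. -/
lemma existsUnique_lift {A B Z : C} (hZ : IsIso (Λ.l.app Z)) (g : A ⟶ B)
    (hg : IsIso (Λ.L.map g)) (f : A ⟶ Z) : ∃! h : B ⟶ Z, g ≫ h = f := by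
  have ng := Λ.l.naturality g
  have nf := Λ.l.naturality f
  simp only [Functor.id_map] at ng nf
  have key : g ≫ Λ.l.app B ≫ inv (Λ.L.map g) ≫ Λ.L.map f ≫ inv (Λ.l.app Z) = f := by
    rw [← Category.assoc, ng, Category.assoc, IsIso.hom_inv_id_assoc,
      ← Category.assoc, ← nf, Category.assoc, IsIso.hom_inv_id, Category.comp_id]
  refine ⟨_, key, fun h hh => Λ.cancel_of_isEquiv hZ g hg (by rw [hh, key])⟩

end LocalizationData

/-- If a monad `T` preserves `L`-equivalences, then every `T`-algebra
structure `a : T X ⟶ X` extends uniquely to a `T`-algebra structure `a'` on `L X` making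
`l_X` a morphism of `T`-algebras. -/
theorem unique_algebra_structure_on_localization
    {C : Type*} [Category C] (T : Monad C) (Λ : LocalizationData C)
    (hT : ∀ ⦃X Y : C⦄ (g : X ⟶ Y), Λ.IsEquiv g → Λ.IsEquiv (T.map g))
    (X : C) (a : T.obj X ⟶ X)
    (hunit : T.η.app X ≫ a = 𝟙 X)
    (hassoc : T.μ.app X ≫ a = T.map a ≫ a) :
    ∃! a' : T.obj (Λ.L.obj X) ⟶ Λ.L.obj X,
      (T.η.app (Λ.L.obj X) ≫ a' = 𝟙 (Λ.L.obj X) ∧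
        T.μ.app (Λ.L.obj X) ≫ a' = T.map a' ≫ a') ∧
      T.map (Λ.l.app X) ≫ a' = a ≫ Λ.l.app X := by
  have hlocal : IsIso (Λ.l.app (Λ.L.obj X)) := by
    rw [← Λ.coincide X]; exact Λ.isIso X
  have hlX : Λ.IsEquiv (Λ.l.app X) := Λ.isIso X
  have hT1 : IsIso (Λ.L.map (T.map (Λ.l.app X))) := hT _ hlX
  have hT2 : IsIso (Λ.L.map (T.map (T.map (Λ.l.app X)))) := hT _ (hT _ hlX)
  obtain ⟨a', ha', huniq⟩ := Λ.existsUnique_lift hlocal (T.map (Λ.l.app X)) hT1 (a ≫ Λ.l.app X)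
  refine ⟨a', ⟨⟨?_, ?_⟩, ha'⟩, fun b hb => huniq b hb.2⟩
  · apply Λ.cancel_of_isEquiv hlocal (Λ.l.app X) hlX
    have nη := T.η.naturality (Λ.l.app X)
    simp only [Functor.id_map, Functor.id_obj] at nη
    rw [← Category.assoc, nη, Category.assoc, ha', ← Category.assoc, hunit]
    simp
  · apply Λ.cancel_of_isEquiv hlocal (T.map (T.map (Λ.l.app X))) hT2
    have nμ := T.μ.naturality (Λ.l.app X)
    simp only [Functor.comp_map, Functor.id_obj] at nμ
    have hTl : T.map (T.map (Λ.l.app X)) ≫ T.map a' = T.map a ≫ T.map (Λ.l.app X) := by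
      rw [← Functor.map_comp, ha', Functor.map_comp]
    calc T.map (T.map (Λ.l.app X)) ≫ T.μ.app (Λ.L.obj X) ≫ a'
        = T.μ.app X ≫ T.map (Λ.l.app X) ≫ a' := by
          rw [← Category.assoc, nμ, Category.assoc]
      _ = (T.μ.app X ≫ a) ≫ Λ.l.app X := by rw [ha', Category.assoc]
      _ = T.map a ≫ a ≫ Λ.l.app X := by rw [hassoc, Category.assoc]
      _ = T.map a ≫ T.map (Λ.l.app X) ≫ a' := by rw [ha']
      _ = T.map (T.map (Λ.l.app X)) ≫ T.map a' ≫ a' := by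
          rw [← Category.assoc, ← hTl, Category.assoc]
end

section
/- Let R be a ring with 1 and let (L, l) be any localization on the category of abelian groups. Then the endofunctor M ↦ R ⊗_ℤ M of the category of abelian groups preserves L-equivalences: if f : X → Y is an L-equivalence of abelian groups, then R ⊗_ℤ f : R ⊗_ℤ X → R ⊗_ℤ Y is an L-equivalence. -/
open CategoryTheory

/-- The endofunctor `M ↦ R ⊗_ℤ M` on the category of abelian groups, for a ring `R`. -/
noncomputable def tensorFunctor (R : Type) [Ring R] : AddCommGrpCat.{0} ⥤ AddCommGrpCat.{0} where
  obj M := AddCommGrpCat.of (TensorProduct ℤ R M)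
  map f := AddCommGrpCat.ofHom
    (TensorProduct.map (LinearMap.id : R →ₗ[ℤ] R) f.hom.toIntLinearMap).toAddMonoidHom
  map_id X := by
    apply AddCommGrpCat.hom_ext
    rw [AddCommGrpCat.hom_ofHom, AddCommGrpCat.hom_id]
    rw [show AddMonoidHom.toIntLinearMap (AddMonoidHom.id X) = (LinearMap.id : _ →ₗ[ℤ] _) from rfl,
      TensorProduct.map_id]
    rfl
  map_comp f g := by
    apply AddCommGrpCat.hom_ext
    simp only [AddCommGrpCat.hom_ofHom, AddCommGrpCat.hom_comp]
    rw [show AddMonoidHom.toIntLinearMap (g.hom.comp f.hom)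
        = (AddMonoidHom.toIntLinearMap g.hom).comp (AddMonoidHom.toIntLinearMap f.hom) from rfl]
    rw [show (LinearMap.id : R →ₗ[ℤ] R)
        = (LinearMap.id : R →ₗ[ℤ] R).comp (LinearMap.id : R →ₗ[ℤ] R) from rfl]
    rw [TensorProduct.map_comp]
    rfl

open TensorProduct

section CatLemmas
variable {C : Type*} [Category C] (Λ : LocalizationData C)

lemma LocalizationData.isLocal_L (X : C) : Λ.IsLocal (Λ.L.obj X) := by
  rw [LocalizationData.IsLocal, ← Λ.coincide]; exact Λ.isIso X

lemma LocalizationData.precomp_l_bijective (V Z : C) (hZ : Λ.IsLocal Z) :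
    Function.Bijective (fun h : Λ.L.obj V ⟶ Z => Λ.l.app V ≫ h) := by
  have : IsIso (Λ.l.app Z) := hZ
  have : IsIso (Λ.L.map (Λ.l.app V)) := Λ.isIso V
  constructor
  · intro k₁ k₂ hk
    simp only at hk
    have h1 : Λ.L.map (Λ.l.app V) ≫ Λ.L.map k₁ = Λ.L.map (Λ.l.app V) ≫ Λ.L.map k₂ := by
      rw [← Λ.L.map_comp, ← Λ.L.map_comp, hk]
    have h2 : Λ.L.map k₁ = Λ.L.map k₂ := by
      rwa [cancel_epi (Λ.L.map (Λ.l.app V))] at h1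
    have n1 : Λ.l.app (Λ.L.obj V) ≫ Λ.L.map k₁ = k₁ ≫ Λ.l.app Z := (Λ.l.naturality k₁).symm
    have n2 : Λ.l.app (Λ.L.obj V) ≫ Λ.L.map k₂ = k₂ ≫ Λ.l.app Z := (Λ.l.naturality k₂).symm
    have : k₁ ≫ Λ.l.app Z = k₂ ≫ Λ.l.app Z := by rw [← n1, ← n2, h2]
    rwa [cancel_mono (Λ.l.app Z)] at this
  · intro h
    refine ⟨Λ.L.map h ≫ inv (Λ.l.app Z), ?_⟩
    have n : Λ.l.app V ≫ Λ.L.map h = h ≫ Λ.l.app Z := (Λ.l.naturality h).symm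
    simp [← Category.assoc, n]

lemma LocalizationData.bijective_of_isEquiv {U V : C} (g : U ⟶ V) (hg : Λ.IsEquiv g)
    (Z : C) (hZ : Λ.IsLocal Z) :
    Function.Bijective (fun h : V ⟶ Z => g ≫ h) := by
  have : IsIso (Λ.L.map g) := hg
  have bU := Λ.precomp_l_bijective U Z hZ
  have bV := Λ.precomp_l_bijective V Z hZ
  constructor
  · intro h₁ h₂ hh
    simp only at hh
    obtain ⟨k₁, hk₁⟩ := bV.2 h₁
    obtain ⟨k₂, hk₂⟩ := bV.2 h₂
    simp only at hk₁ hk₂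
    have n : g ≫ Λ.l.app V = Λ.l.app U ≫ Λ.L.map g := Λ.l.naturality g
    have e : Λ.l.app U ≫ (Λ.L.map g ≫ k₁) = Λ.l.app U ≫ (Λ.L.map g ≫ k₂) := by
      rw [← Category.assoc, ← n, ← Category.assoc, ← n, Category.assoc, Category.assoc,
        hk₁, hk₂, hh]
    have := bU.1 e
    have : k₁ = k₂ := by rwa [cancel_epi (Λ.L.map g)] at this
    rw [← hk₁, ← hk₂, this]
  · intro k
    obtain ⟨k', hk'⟩ := bU.2 k
    simp only at hk'
    refine ⟨Λ.l.app V ≫ inv (Λ.L.map g) ≫ k', ?_⟩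
    have n : g ≫ Λ.l.app V = Λ.l.app U ≫ Λ.L.map g := Λ.l.naturality g
    simp only [← Category.assoc, n]
    simp [hk']

lemma LocalizationData.isEquiv_of_bijective {U V : C} (g : U ⟶ V)
    (hb : ∀ Z : C, Λ.IsLocal Z → Function.Bijective (fun h : V ⟶ Z => g ≫ h)) :
    Λ.IsEquiv g := by
  have hLU := Λ.isLocal_L U
  have hLV := Λ.isLocal_L V
  have : IsIso (Λ.L.map (Λ.l.app U)) := Λ.isIso U
  obtain ⟨r, hr⟩ := (hb _ hLU).2 (Λ.l.app U)
  simp only at hr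
  set t := Λ.L.map r ≫ inv (Λ.L.map (Λ.l.app U)) with ht
  have left : Λ.L.map g ≫ t = 𝟙 _ := by
    rw [ht, ← Category.assoc, ← Λ.L.map_comp, hr, IsIso.hom_inv_id]
  have hrg : r ≫ Λ.L.map g = Λ.l.app V := by
    apply (hb _ hLV).1
    simp only
    have n : g ≫ Λ.l.app V = Λ.l.app U ≫ Λ.L.map g := Λ.l.naturality g
    rw [← Category.assoc, hr, n]
  have right : t ≫ Λ.L.map g = 𝟙 _ := by
    apply (Λ.precomp_l_bijective V _ (Λ.isLocal_L V)).1
    simp only [Category.comp_id]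
    have n : r ≫ Λ.l.app (Λ.L.obj U) = Λ.l.app V ≫ Λ.L.map r := by
      simpa using Λ.l.naturality r
    rw [ht, ← Category.assoc, ← Category.assoc, ← n, ← Λ.coincide]
    simp [hrg]
  exact ⟨t, left, right⟩

end CatLemmas

lemma tensor_addHom_ext {M N P : Type} [AddCommGroup M] [AddCommGroup N] [AddCommGroup P]
    {g₁ g₂ : TensorProduct ℤ M N →+ P} (h : ∀ m n, g₁ (m ⊗ₜ n) = g₂ (m ⊗ₜ n)) : g₁ = g₂ := by
  ext z
  induction z using TensorProduct.induction_on with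
  | zero => simp
  | tmul m n => exact h m n
  | add x y hx hy => simp [map_add, hx, hy]


/-- For every ring `R` and every localization `L` on the category of abelian
groups, the endofunctor `R ⊗_ℤ –` preserves `L`-equivalences. -/
theorem tensor_preserves_localization_equivalences
    (R : Type) [Ring R] (Λ : LocalizationData AddCommGrpCat.{0})
    ⦃X Y : AddCommGrpCat.{0}⦄ (f : X ⟶ Y) (hf : Λ.IsEquiv f) :
    Λ.IsEquiv ((tensorFunctor R).map f) := by
  apply Λ.isEquiv_of_bijective
  intro Z hZ
  have hbij : Function.Bijective (fun h : Y ⟶ Z => f ≫ h) :=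
    Λ.bijective_of_isEquiv f hf Z hZ
  have key : ∀ (h : (tensorFunctor R).obj Y ⟶ Z) (r : R) (x : X),
      ((tensorFunctor R).map f ≫ h) (r ⊗ₜ x) = h (r ⊗ₜ f x) := by
    intro h r x
    show h (((tensorFunctor R).map f) (r ⊗ₜ x)) = _
    show h.hom ((TensorProduct.map (LinearMap.id : R →ₗ[ℤ] R) f.hom.toIntLinearMap) (r ⊗ₜ x)) = _
    rw [TensorProduct.map_tmul]
    rfl
  constructor
  · intro h₁ h₂ hh
    simp only at hh
    apply AddCommGrpCat.hom_ext
    apply tensor_addHom_ext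
    intro r y
    -- the maps y ↦ hᵢ (r ⊗ₜ y) as morphisms Y ⟶ Z
    have := hbij.1 (a₁ := AddCommGrpCat.ofHom (AddMonoidHom.comp h₁.hom ((TensorProduct.mk ℤ R Y r).toAddMonoidHom)))
      (a₂ := AddCommGrpCat.ofHom (AddMonoidHom.comp h₂.hom ((TensorProduct.mk ℤ R Y r).toAddMonoidHom))) ?_
    · exact congrArg (fun (g : Y ⟶ Z) => g y) this
    · apply AddCommGrpCat.hom_ext
      ext x
      show h₁ (r ⊗ₜ f x) = h₂ (r ⊗ₜ f x)
      rw [← key h₁ r x, ← key h₂ r x, hh]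
  · intro k
    set e := Equiv.ofBijective _ hbij with he
    set krfun : R → (X ⟶ Z) :=
      fun r => AddCommGrpCat.ofHom (AddMonoidHom.comp k.hom ((TensorProduct.mk ℤ R X r).toAddMonoidHom)) with hkr
    set hfun : R → (Y ⟶ Z) := fun r => e.symm (krfun r) with hhf
    have hcomp : ∀ r : R, f ≫ hfun r = krfun r := fun r => e.apply_symm_apply (krfun r)
    have hadd : ∀ r s : R, hfun (r + s) = hfun r + hfun s := by
      intro r s
      apply hbij.1
      show f ≫ hfun (r + s) = f ≫ (hfun r + hfun s)
      have h1 : f ≫ (hfun r + hfun s) = f ≫ hfun r + f ≫ hfun s := by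
        apply AddCommGrpCat.hom_ext
        ext x; simp
      rw [hcomp, h1, hcomp, hcomp]
      ext x
      show k ((r + s) ⊗ₜ x) = k (r ⊗ₜ x) + k (s ⊗ₜ x)
      rw [TensorProduct.add_tmul]
      exact map_add k.hom _ _
    set bil : R →+ (Y →+ Z) := AddMonoidHom.mk' (fun r => (hfun r).hom)
      (fun r s => by rw [hadd]; rfl) with hbil
    have hsmul : ∀ (z : ℤ) (r : R) (m : Y), (bil (z • r)) m = (bil r) (z • m) := by
      intro z r m
      rw [map_zsmul, AddMonoidHom.smul_apply, ← map_zsmul]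
    refine ⟨AddCommGrpCat.ofHom (TensorProduct.liftAddHom bil hsmul), ?_⟩
    apply AddCommGrpCat.hom_ext
    apply tensor_addHom_ext
    intro r x
    show ((tensorFunctor R).map f ≫ (AddCommGrpCat.ofHom (TensorProduct.liftAddHom bil hsmul) :
      (tensorFunctor R).obj Y ⟶ Z)) (r ⊗ₜ x) = k (r ⊗ₜ x)
    refine (key (AddCommGrpCat.ofHom (TensorProduct.liftAddHom bil hsmul)) r x).trans ?_
    show (bil r) (f x) = k (r ⊗ₜ x)
    show (hfun r) (f x) = k (r ⊗ₜ x)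
    have := congrArg (fun (g : X ⟶ Z) => g x) (hcomp r)
    exact this
end

section
/- Let F : C₁ ⇄ C₂ : G be an adjunction, let f : A → B be a morphism in C₁, and suppose that an f-localization functor (L_f, l) on C₁ and an Ff-localization functor (L_{Ff}, l') on C₂ exist. Then: (1) there is a unique natural transformation α : F ∘ L_f → L_{Ff} ∘ F with α_X ∘ F(l_X) = l'_{FX} for all X, and each α_X is an Ff-equivalence; (2) there is a unique natural transformation β : L_f ∘ G → G ∘ L_{Ff} with β_Y ∘ l_{GY} = G(l'_Y) for all Y; (3) α is a natural isomorphism if and only if F sends f-local objects to Ff-local objects; and (4) β is a natural isomorphism if and only if G sends Ff-equivalences to f-equivalences. -/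
open CategoryTheory

/-- An object `X` is `f`-local if precomposition with `f` gives a bijection
`C(B, X) → C(A, X)`. -/
def IsLocalWrt {C : Type*} [Category C] {A B : C} (f : A ⟶ B) (X : C) : Prop :=
  Function.Bijective (fun g : B ⟶ X => f ≫ g)

/-- A morphism `g` is an `f`-equivalence if every `f`-local object is orthogonal to `g`. -/
def IsEquivWrt {C : Type*} [Category C] {A B : C} (f : A ⟶ B) {U V : C} (g : U ⟶ V) : Prop :=
  ∀ X : C, IsLocalWrt f X → Function.Bijective (fun h : V ⟶ X => g ≫ h)

/-- An `f`-localization functor: a localization whose local objects (those `X` with `l_X` an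
isomorphism) are exactly the `f`-local objects, and whose unit components are
`f`-equivalences. -/
structure FLocalization {C : Type*} [Category C] {A B : C} (f : A ⟶ B)
    extends LocalizationData C where
  local_iff : ∀ X : C, IsIso (l.app X) ↔ IsLocalWrt f X
  unit_isEquiv : ∀ X : C, IsEquivWrt f (l.app X)

section Aux

variable {C : Type*} [Category C] {A B : C} (f : A ⟶ B)

lemma precomp_bij_of_isIso {U V X : C} (g : U ⟶ V) [IsIso g] :
    Function.Bijective (fun k : V ⟶ X => g ≫ k) := by
  constructor
  · intro a b h
    simpa using congrArg (fun t => inv g ≫ t) h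
  · intro k
    exact ⟨inv g ≫ k, by simp⟩

lemma isEquiv_of_isIso {U V : C} (g : U ⟶ V) [IsIso g] : IsEquivWrt f g :=
  fun X _ => precomp_bij_of_isIso g

lemma isEquiv_comp {U V W : C} {g : U ⟶ V} {h : V ⟶ W}
    (hg : IsEquivWrt f g) (hh : IsEquivWrt f h) : IsEquivWrt f (g ≫ h) := by
  intro X hX
  have heq : (fun k : W ⟶ X => (g ≫ h) ≫ k)
      = (fun k : V ⟶ X => g ≫ k) ∘ (fun k : W ⟶ X => h ≫ k) := by
    funext k; simp
  rw [heq]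
  exact (hg X hX).comp (hh X hX)

lemma isEquiv_cancel_left {U V W : C} {g : U ⟶ V} {h : V ⟶ W}
    (hg : IsEquivWrt f g) (hgh : IsEquivWrt f (g ≫ h)) : IsEquivWrt f h := by
  intro X hX
  have hgX := hg X hX
  have hghX := hgh X hX
  have heq : (fun k : W ⟶ X => (g ≫ h) ≫ k)
      = (fun k : V ⟶ X => g ≫ k) ∘ (fun k : W ⟶ X => h ≫ k) := by
    funext k; simp
  rw [heq] at hghX
  constructor
  · exact Function.Injective.of_comp hghX.1
  · intro k
    obtain ⟨m, hm⟩ := hghX.2 (g ≫ k)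
    exact ⟨m, hgX.1 hm⟩

lemma isIso_of_isEquiv {U V : C} (g : U ⟶ V) (hg : IsEquivWrt f g)
    (hU : IsLocalWrt f U) (hV : IsLocalWrt f V) : IsIso g := by
  obtain ⟨h, hh⟩ := (hg U hU).2 (𝟙 U)
  have hh' : g ≫ h = 𝟙 U := hh
  refine ⟨h, hh', ?_⟩
  apply (hg V hV).1
  show g ≫ h ≫ g = g ≫ 𝟙 V
  rw [← Category.assoc, hh']; simp

noncomputable def extMor {U V X : C} (g : U ⟶ V) (hg : IsEquivWrt f g) (hX : IsLocalWrt f X)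
    (k : U ⟶ X) : V ⟶ X :=
  (Equiv.ofBijective _ (hg X hX)).symm k

lemma extMor_fac {U V X : C} (g : U ⟶ V) (hg : IsEquivWrt f g) (hX : IsLocalWrt f X)
    (k : U ⟶ X) : g ≫ extMor f g hg hX k = k :=
  (Equiv.ofBijective _ (hg X hX)).apply_symm_apply k

lemma FLocalization.L_local (Lf : FLocalization f) (X : C) : IsLocalWrt f (Lf.L.obj X) := by
  rw [← Lf.local_iff]
  have h := Lf.isIso X
  rwa [Lf.coincide X] at h

lemma FLocalization.L_map_isIso (Lf : FLocalization f) {U V : C} {g : U ⟶ V}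
    (hg : IsEquivWrt f g) : IsIso (Lf.L.map g) := by
  have hnat : Lf.l.app U ≫ Lf.L.map g = g ≫ Lf.l.app V := by
    simpa using (Lf.l.naturality g).symm
  have hcomp : IsEquivWrt f (Lf.l.app U ≫ Lf.L.map g) := by
    rw [hnat]
    exact isEquiv_comp f hg (Lf.unit_isEquiv V)
  exact isIso_of_isEquiv f _ (isEquiv_cancel_left f (Lf.unit_isEquiv U) hcomp)
    (Lf.L_local f U) (Lf.L_local f V)

end Aux

section Adj

variable {C₁ C₂ : Type*} [Category C₁] [Category C₂]
  {F : C₁ ⥤ C₂} {G : C₂ ⥤ C₁} {A B : C₁} (f : A ⟶ B)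

lemma G_local (adj : F ⊣ G) {Y : C₂} (hY : IsLocalWrt (F.map f) Y) : IsLocalWrt f (G.obj Y) := by
  have key : (fun g : B ⟶ G.obj Y => f ≫ g)
      = (adj.homEquiv A Y) ∘ (fun g : F.obj B ⟶ Y => F.map f ≫ g) ∘ (adj.homEquiv B Y).symm := by
    funext g
    simp [Adjunction.homEquiv_naturality_left]
  rw [IsLocalWrt, key]
  exact ((adj.homEquiv A Y).bijective.comp hY).comp (adj.homEquiv B Y).symm.bijective

lemma F_map_isEquiv (adj : F ⊣ G) {U V : C₁} {g : U ⟶ V} (hg : IsEquivWrt f g) :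
    IsEquivWrt (F.map f) (F.map g) := by
  intro Y hY
  have key : (fun k : F.obj V ⟶ Y => F.map g ≫ k)
      = (adj.homEquiv U Y).symm ∘ (fun k : V ⟶ G.obj Y => g ≫ k) ∘ (adj.homEquiv V Y) := by
    funext k
    simp [Adjunction.homEquiv_naturality_left_symm]
  rw [key]
  exact ((adj.homEquiv U Y).symm.bijective.comp (hg _ (G_local f adj hY))).comp
    (adj.homEquiv V Y).bijective

end Adj

section Main

variable {C₁ C₂ : Type*} [Category C₁] [Category C₂]
  {F : C₁ ⥤ C₂} {G : C₂ ⥤ C₁} (adj : F ⊣ G) {A B : C₁} (f : A ⟶ B)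
  (Lf : FLocalization f) (LFf : FLocalization (F.map f))

/-- The component of the comparison transformation `α`. -/
noncomputable def alphaApp (X : C₁) : F.obj (Lf.L.obj X) ⟶ LFf.L.obj (F.obj X) :=
  extMor (F.map f) (F.map (Lf.l.app X)) (F_map_isEquiv f adj (Lf.unit_isEquiv X))
    (LFf.L_local (F.map f) (F.obj X)) (LFf.l.app (F.obj X))

lemma alphaApp_fac (X : C₁) :
    F.map (Lf.l.app X) ≫ alphaApp adj f Lf LFf X = LFf.l.app (F.obj X) :=
  extMor_fac _ _ _ _ _

lemma alphaApp_natural {X X' : C₁} (u : X ⟶ X') :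
    F.map (Lf.L.map u) ≫ alphaApp adj f Lf LFf X'
      = alphaApp adj f Lf LFf X ≫ LFf.L.map (F.map u) := by
  apply ((F_map_isEquiv f adj (Lf.unit_isEquiv X)) _ (LFf.L_local (F.map f) (F.obj X'))).1
  show F.map (Lf.l.app X) ≫ F.map (Lf.L.map u) ≫ alphaApp adj f Lf LFf X'
      = F.map (Lf.l.app X) ≫ alphaApp adj f Lf LFf X ≫ LFf.L.map (F.map u)
  have h1 : Lf.l.app X ≫ Lf.L.map u = u ≫ Lf.l.app X' := by
    simpa using (Lf.l.naturality u).symm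
  have h2 : F.map u ≫ LFf.l.app (F.obj X') = LFf.l.app (F.obj X) ≫ LFf.L.map (F.map u) := by
    simpa using LFf.l.naturality (F.map u)
  calc F.map (Lf.l.app X) ≫ F.map (Lf.L.map u) ≫ alphaApp adj f Lf LFf X'
      = F.map (Lf.l.app X ≫ Lf.L.map u) ≫ alphaApp adj f Lf LFf X' := by
        rw [F.map_comp, Category.assoc]
    _ = F.map u ≫ F.map (Lf.l.app X') ≫ alphaApp adj f Lf LFf X' := by
        rw [h1, F.map_comp, Category.assoc]
    _ = F.map u ≫ LFf.l.app (F.obj X') := by rw [alphaApp_fac]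
    _ = LFf.l.app (F.obj X) ≫ LFf.L.map (F.map u) := h2
    _ = (F.map (Lf.l.app X) ≫ alphaApp adj f Lf LFf X) ≫ LFf.L.map (F.map u) := by
        rw [alphaApp_fac]
    _ = F.map (Lf.l.app X) ≫ alphaApp adj f Lf LFf X ≫ LFf.L.map (F.map u) := by
        rw [Category.assoc]

/-- The comparison transformation `α : L_f ⋙ F ⟶ F ⋙ L_{F f}`. -/
noncomputable def alphaTrans : Lf.L ⋙ F ⟶ F ⋙ LFf.L where
  app X := alphaApp adj f Lf LFf X
  naturality _ _ u := alphaApp_natural adj f Lf LFf u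

lemma alphaApp_isEquiv (X : C₁) : IsEquivWrt (F.map f) (alphaApp adj f Lf LFf X) :=
  isEquiv_cancel_left (F.map f) (F_map_isEquiv f adj (Lf.unit_isEquiv X))
    ((alphaApp_fac adj f Lf LFf X).symm ▸ LFf.unit_isEquiv (F.obj X))

/-- The component of the comparison transformation `β`. -/
noncomputable def betaApp (Y : C₂) : Lf.L.obj (G.obj Y) ⟶ G.obj (LFf.L.obj Y) :=
  extMor f (Lf.l.app (G.obj Y)) (Lf.unit_isEquiv (G.obj Y))
    (G_local f adj (LFf.L_local (F.map f) Y)) (G.map (LFf.l.app Y))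

lemma betaApp_fac (Y : C₂) :
    Lf.l.app (G.obj Y) ≫ betaApp adj f Lf LFf Y = G.map (LFf.l.app Y) :=
  extMor_fac _ _ _ _ _

lemma betaApp_natural {Y Y' : C₂} (v : Y ⟶ Y') :
    Lf.L.map (G.map v) ≫ betaApp adj f Lf LFf Y'
      = betaApp adj f Lf LFf Y ≫ G.map (LFf.L.map v) := by
  apply ((Lf.unit_isEquiv (G.obj Y)) _ (G_local f adj (LFf.L_local (F.map f) Y'))).1
  show Lf.l.app (G.obj Y) ≫ Lf.L.map (G.map v) ≫ betaApp adj f Lf LFf Y'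
      = Lf.l.app (G.obj Y) ≫ betaApp adj f Lf LFf Y ≫ G.map (LFf.L.map v)
  have h1 : Lf.l.app (G.obj Y) ≫ Lf.L.map (G.map v) = G.map v ≫ Lf.l.app (G.obj Y') := by
    simpa using (Lf.l.naturality (G.map v)).symm
  have h2 : v ≫ LFf.l.app Y' = LFf.l.app Y ≫ LFf.L.map v := by
    simpa using LFf.l.naturality v
  calc Lf.l.app (G.obj Y) ≫ Lf.L.map (G.map v) ≫ betaApp adj f Lf LFf Y'
      = (Lf.l.app (G.obj Y) ≫ Lf.L.map (G.map v)) ≫ betaApp adj f Lf LFf Y' := by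
        rw [Category.assoc]
    _ = G.map v ≫ Lf.l.app (G.obj Y') ≫ betaApp adj f Lf LFf Y' := by
        rw [h1, Category.assoc]
    _ = G.map v ≫ G.map (LFf.l.app Y') := by rw [betaApp_fac]
    _ = G.map (v ≫ LFf.l.app Y') := by rw [G.map_comp]
    _ = G.map (LFf.l.app Y) ≫ G.map (LFf.L.map v) := by rw [h2, G.map_comp]
    _ = (Lf.l.app (G.obj Y) ≫ betaApp adj f Lf LFf Y) ≫ G.map (LFf.L.map v) := by
        rw [betaApp_fac]
    _ = Lf.l.app (G.obj Y) ≫ betaApp adj f Lf LFf Y ≫ G.map (LFf.L.map v) := by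
        rw [Category.assoc]

/-- The comparison transformation `β : G ⋙ L_f ⟶ L_{F f} ⋙ G`. -/
noncomputable def betaTrans : G ⋙ Lf.L ⟶ LFf.L ⋙ G where
  app Y := betaApp adj f Lf LFf Y
  naturality _ _ v := betaApp_natural adj f Lf LFf v

end Main

/-- For an adjunction `F ⊣ G`, a morphism `f` in `C₁`, an `f`-localization
`L_f` on `C₁` and an `F f`-localization `L_{F f}` on `C₂`: (1) there is a unique natural
transformation `α : F ∘ L_f ⟶ L_{F f} ∘ F` with `α_X ∘ F(l_X) = l'_{F X}`, whose components
are `F f`-equivalences; (2) there is a unique natural transformation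
`β : L_f ∘ G ⟶ G ∘ L_{F f}` with `β_Y ∘ l_{G Y} = G(l'_Y)`; (3) `α` is an isomorphism iff `F`
sends `f`-local objects to `F f`-local objects; (4) `β` is an isomorphism iff `G` sends
`F f`-equivalences to `f`-equivalences. -/
theorem comparison_transformations_for_f_localizations
    {C₁ C₂ : Type*} [Category C₁] [Category C₂]
    (F : C₁ ⥤ C₂) (G : C₂ ⥤ C₁) (adj : F ⊣ G)
    {A B : C₁} (f : A ⟶ B)
    (Lf : FLocalization f) (LFf : FLocalization (F.map f)) :
    (∃ α : Lf.L ⋙ F ⟶ F ⋙ LFf.L,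
      (∀ X : C₁, F.map (Lf.l.app X) ≫ α.app X = LFf.l.app (F.obj X)) ∧
      (∀ X : C₁, IsEquivWrt (F.map f) (α.app X)) ∧
      (∀ α' : Lf.L ⋙ F ⟶ F ⋙ LFf.L,
        (∀ X : C₁, F.map (Lf.l.app X) ≫ α'.app X = LFf.l.app (F.obj X)) → α' = α) ∧
      (IsIso α ↔ ∀ X : C₁, IsLocalWrt f X → IsLocalWrt (F.map f) (F.obj X))) ∧
    (∃ β : G ⋙ Lf.L ⟶ LFf.L ⋙ G,
      (∀ Y : C₂, Lf.l.app (G.obj Y) ≫ β.app Y = G.map (LFf.l.app Y)) ∧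
      (∀ β' : G ⋙ Lf.L ⟶ LFf.L ⋙ G,
        (∀ Y : C₂, Lf.l.app (G.obj Y) ≫ β'.app Y = G.map (LFf.l.app Y)) → β' = β) ∧
      (IsIso β ↔ ∀ ⦃U V : C₂⦄ (g : U ⟶ V),
        IsEquivWrt (F.map f) g → IsEquivWrt f (G.map g))) := by
  constructor
  · -- Part (1) and (3): the transformation α
    refine ⟨alphaTrans adj f Lf LFf, alphaApp_fac adj f Lf LFf,
      alphaApp_isEquiv adj f Lf LFf, ?_, ?_, ?_⟩
    · -- uniqueness of α
      intro α' hα'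
      ext X
      apply ((F_map_isEquiv f adj (Lf.unit_isEquiv X)) _ (LFf.L_local (F.map f) (F.obj X))).1
      show F.map (Lf.l.app X) ≫ α'.app X = F.map (Lf.l.app X) ≫ (alphaTrans adj f Lf LFf).app X
      rw [hα' X]
      exact (alphaApp_fac adj f Lf LFf X).symm
    · -- iso criterion for α: forward direction
      intro hiso X hX
      haveI h1 : IsIso ((alphaTrans adj f Lf LFf).app X) := inferInstance
      haveI : IsIso (alphaApp adj f Lf LFf X) := h1
      haveI : IsIso (Lf.l.app X) := (Lf.local_iff X).2 hX
      have h : IsIso (LFf.l.app (F.obj X)) := by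
        rw [← alphaApp_fac adj f Lf LFf X]
        infer_instance
      exact (LFf.local_iff (F.obj X)).1 h
    · -- iso criterion for α: backward direction
      intro hpres
      haveI : ∀ X : C₁, IsIso ((alphaTrans adj f Lf LFf).app X) := fun X =>
        isIso_of_isEquiv (F.map f) _ (alphaApp_isEquiv adj f Lf LFf X)
          (hpres _ (Lf.L_local f X)) (LFf.L_local (F.map f) (F.obj X))
      exact NatIso.isIso_of_isIso_app _
  · -- Part (2) and (4): the transformation β
    refine ⟨betaTrans adj f Lf LFf, betaApp_fac adj f Lf LFf, ?_, ?_⟩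
    · -- uniqueness of β
      intro β' hβ'
      ext Y
      apply ((Lf.unit_isEquiv (G.obj Y)) _ (G_local f adj (LFf.L_local (F.map f) Y))).1
      show Lf.l.app (G.obj Y) ≫ β'.app Y = Lf.l.app (G.obj Y) ≫ (betaTrans adj f Lf LFf).app Y
      rw [hβ' Y]
      exact (betaApp_fac adj f Lf LFf Y).symm
    · -- iso criterion for β
      constructor
      · -- β iso implies G preserves equivalences
        intro hiso U V g hg X hX
        haveI : IsIso (LFf.L.map g) := LFf.L_map_isIso (F.map f) hg
        haveI : IsIso (G.map (LFf.L.map g)) := inferInstance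
        have aY : ∀ Y : C₂, Function.Bijective
            (fun k : G.obj (LFf.L.obj Y) ⟶ X => G.map (LFf.l.app Y) ≫ k) := by
          intro Y
          haveI h1 : IsIso ((betaTrans adj f Lf LFf).app Y) := inferInstance
          haveI : IsIso (betaApp adj f Lf LFf Y) := h1
          have heq : (fun k : G.obj (LFf.L.obj Y) ⟶ X => G.map (LFf.l.app Y) ≫ k)
              = (fun m : Lf.L.obj (G.obj Y) ⟶ X => Lf.l.app (G.obj Y) ≫ m)
                ∘ (fun k : G.obj (LFf.L.obj Y) ⟶ X => betaApp adj f Lf LFf Y ≫ k) := by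
            funext k
            show G.map (LFf.l.app Y) ≫ k
                = Lf.l.app (G.obj Y) ≫ betaApp adj f Lf LFf Y ≫ k
            rw [← betaApp_fac adj f Lf LFf Y, Category.assoc]
          rw [heq]
          exact (Lf.unit_isEquiv (G.obj Y) X hX).comp (precomp_bij_of_isIso _)
        have hnat : G.map g ≫ G.map (LFf.l.app V)
            = G.map (LFf.l.app U) ≫ G.map (LFf.L.map g) := by
          rw [← G.map_comp, ← G.map_comp]
          congr 1
          simpa using LFf.l.naturality g
        have key : (fun k : G.obj V ⟶ X => G.map g ≫ k)
            = (fun m : G.obj (LFf.L.obj U) ⟶ X => G.map (LFf.l.app U) ≫ m)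
              ∘ (fun m : G.obj (LFf.L.obj V) ⟶ X => G.map (LFf.L.map g) ≫ m)
              ∘ (Equiv.ofBijective _ (aY V)).symm := by
          funext k
          set m := (Equiv.ofBijective _ (aY V)).symm k with hm
          have hk : G.map (LFf.l.app V) ≫ m = k :=
            (Equiv.ofBijective _ (aY V)).apply_symm_apply k
          show G.map g ≫ k
              = G.map (LFf.l.app U) ≫ G.map (LFf.L.map g) ≫ m
          calc G.map g ≫ k = G.map g ≫ G.map (LFf.l.app V) ≫ m := by rw [hk]
            _ = (G.map g ≫ G.map (LFf.l.app V)) ≫ m := by rw [Category.assoc]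
            _ = (G.map (LFf.l.app U) ≫ G.map (LFf.L.map g)) ≫ m := by rw [hnat]
            _ = G.map (LFf.l.app U) ≫ G.map (LFf.L.map g) ≫ m := by rw [Category.assoc]
        rw [key]
        exact ((aY U).comp (precomp_bij_of_isIso _)).comp
          (Equiv.ofBijective _ (aY V)).symm.bijective
      · -- G preserving equivalences implies β iso
        intro hpres
        haveI : ∀ Y : C₂, IsIso ((betaTrans adj f Lf LFf).app Y) := fun Y =>
          isIso_of_isEquiv f _
            (isEquiv_cancel_left f (Lf.unit_isEquiv (G.obj Y))
              ((betaApp_fac adj f Lf LFf Y).symm ▸ hpres (LFf.l.app Y) (LFf.unit_isEquiv Y)))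
            (Lf.L_local f (G.obj Y)) (G_local f adj (LFf.L_local (F.map f) Y))
        exact NatIso.isIso_of_isIso_app _
end

section
/- Let (T, η, μ) be a monad on a category C with Eilenberg–Moore adjunction F : C ⇄ C^T : U, and let f be a morphism in C such that an f-localization functor L_f exists on C. Then there exists an Ff-localization functor L_{Ff} on C^T together with a natural isomorphism L_f ∘ U ≅ U ∘ L_{Ff} if and only if T preserves f-equivalences (i.e. Tg is an f-equivalence whenever g is an f-equivalence). -/
open CategoryTheory

namespace FLocProof

variable {C : Type*} [Category C] {A B : C} {f : A ⟶ B}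

noncomputable def extendAlong {U V X : C} {g : U ⟶ V} (hg : IsEquivWrt f g)
    (hX : IsLocalWrt f X) (h : U ⟶ X) : V ⟶ X := ((hg X hX).2 h).choose

lemma extend_fac {U V X : C} {g : U ⟶ V} (hg : IsEquivWrt f g)
    (hX : IsLocalWrt f X) (h : U ⟶ X) : g ≫ extendAlong hg hX h = h :=
  ((hg X hX).2 h).choose_spec

lemma hom_ext {U V X : C} {g : U ⟶ V} (hg : IsEquivWrt f g)
    (hX : IsLocalWrt f X) {p q : V ⟶ X} (w : g ≫ p = g ≫ q) : p = q :=
  (hg X hX).1 w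

lemma L_obj_local (Lf : FLocalization f) (X : C) : IsLocalWrt f (Lf.L.obj X) := by
  have : IsIso (Lf.l.app (Lf.L.obj X)) := Lf.coincide X ▸ Lf.isIso X
  exact (Lf.local_iff _).mp this

lemma isEquiv_iff_isIso_L_map (Lf : FLocalization f) {U V : C} (g : U ⟶ V) :
    IsEquivWrt f g ↔ IsIso (Lf.L.map g) := by
  have nat : ∀ {U V : C} (g : U ⟶ V), Lf.l.app U ≫ Lf.L.map g = g ≫ Lf.l.app V := by
    intro U V g
    simpa using (Lf.l.naturality g).symm
  constructor
  · intro hg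
    set h' : V ⟶ Lf.L.obj U := extendAlong hg (L_obj_local Lf U) (Lf.l.app U) with hh'
    have fac1 : g ≫ h' = Lf.l.app U := extend_fac hg (L_obj_local Lf U) (Lf.l.app U)
    set inv' : Lf.L.obj V ⟶ Lf.L.obj U :=
      extendAlong (Lf.unit_isEquiv V) (L_obj_local Lf U) h' with hinv'
    have fac2 : Lf.l.app V ≫ inv' = h' := extend_fac (Lf.unit_isEquiv V) (L_obj_local Lf U) h'
    have key : h' ≫ Lf.L.map g = Lf.l.app V := by
      apply hom_ext hg (L_obj_local Lf V)
      rw [← Category.assoc, fac1, nat g]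
    refine ⟨inv', ?_, ?_⟩
    · apply hom_ext (Lf.unit_isEquiv U) (L_obj_local Lf U)
      rw [← Category.assoc, nat g, Category.assoc, fac2, fac1, Category.comp_id]
    · apply hom_ext (Lf.unit_isEquiv V) (L_obj_local Lf V)
      rw [← Category.assoc, fac2, key, Category.comp_id]
  · intro hiso X hX
    have e1 : Function.Bijective (fun h : Lf.L.obj V ⟶ X => Lf.l.app V ≫ h) :=
      Lf.unit_isEquiv V X hX
    have e3 : Function.Bijective (fun h : Lf.L.obj U ⟶ X => Lf.l.app U ≫ h) :=
      Lf.unit_isEquiv U X hX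
    have e2 : Function.Bijective (fun h : Lf.L.obj V ⟶ X => Lf.L.map g ≫ h) := by
      constructor
      · intro p q hpq
        simpa using congrArg (fun t => inv (Lf.L.map g) ≫ t) hpq
      · intro k
        exact ⟨inv (Lf.L.map g) ≫ k, by simp⟩
    set eq1 := Equiv.ofBijective _ e1 with heq1
    have : (fun h : V ⟶ X => g ≫ h) =
        (fun h : Lf.L.obj U ⟶ X => Lf.l.app U ≫ h) ∘
        (fun h : Lf.L.obj V ⟶ X => Lf.L.map g ≫ h) ∘ eq1.symm := by
      funext h
      have hh : Lf.l.app V ≫ eq1.symm h = h := eq1.apply_symm_apply h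
      simp only [Function.comp_apply]
      rw [← Category.assoc, nat g, Category.assoc, hh]
    rw [this]
    exact (e3.comp e2).comp eq1.symm.bijective

variable (T : Monad C)

lemma free_precomp_bijective_iff {U V : C} (g : U ⟶ V) (Z : T.Algebra) :
    Function.Bijective (fun h : T.free.obj V ⟶ Z => T.free.map g ≫ h) ↔
    Function.Bijective (fun k : V ⟶ Z.A => g ≫ k) := by
  have key : ∀ h : T.free.obj V ⟶ Z,
      (T.adj.homEquiv U Z) (T.free.map g ≫ h) = g ≫ (T.adj.homEquiv V Z) h := fun h =>
    T.adj.homEquiv_naturality_left g h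
  constructor
  · intro hb
    have : (fun k : V ⟶ Z.A => g ≫ k) =
        (T.adj.homEquiv U Z) ∘ (fun h => T.free.map g ≫ h) ∘ (T.adj.homEquiv V Z).symm := by
      funext k
      show g ≫ k = T.adj.homEquiv U Z (T.free.map g ≫ (T.adj.homEquiv V Z).symm k)
      rw [key]
      exact (congrArg (fun t => g ≫ t) ((T.adj.homEquiv V Z).apply_symm_apply k)).symm
    rw [this]
    exact ((T.adj.homEquiv U Z).bijective.comp hb).comp (T.adj.homEquiv V Z).symm.bijective
  · intro hb
    have : (fun h : T.free.obj V ⟶ Z => T.free.map g ≫ h) =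
        (T.adj.homEquiv U Z).symm ∘ (fun k => g ≫ k) ∘ (T.adj.homEquiv V Z) := by
      funext h
      simp only [Function.comp_apply, ← key, Equiv.symm_apply_apply]
    rw [this]
    exact ((T.adj.homEquiv U Z).symm.bijective.comp hb).comp (T.adj.homEquiv V Z).bijective

lemma localWrt_free_iff (Z : T.Algebra) :
    IsLocalWrt (T.free.map f) Z ↔ IsLocalWrt f Z.A :=
  free_precomp_bijective_iff T f Z

lemma free_map_isEquiv {U V : C} (g : U ⟶ V) (hg : IsEquivWrt f g) :
    IsEquivWrt (T.free.map f) (T.free.map g) := fun Z hZ =>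
  (free_precomp_bijective_iff T g Z).mpr (hg Z.A ((localWrt_free_iff T Z).mp hZ))

section Construction

variable (Lf : FLocalization f)
variable (hT : ∀ ⦃U V : C⦄ (g : U ⟶ V), IsEquivWrt f g → IsEquivWrt f (T.map g))

@[reducible] noncomputable def liftedAlg (X : T.Algebra) : T.Algebra where
  A := Lf.L.obj X.A
  a := extendAlong (hT _ (Lf.unit_isEquiv X.A)) (L_obj_local Lf X.A) (X.a ≫ Lf.l.app X.A)
  unit := by
    apply hom_ext (Lf.unit_isEquiv X.A) (L_obj_local Lf X.A)
    have nat : Lf.l.app X.A ≫ T.η.app (Lf.L.obj X.A) =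
        T.η.app X.A ≫ T.map (Lf.l.app X.A) := by
      simpa using T.η.naturality (Lf.l.app X.A)
    rw [← Category.assoc, nat, Category.assoc,
      extend_fac (hT _ (Lf.unit_isEquiv X.A)) (L_obj_local Lf X.A), X.unit_assoc,
      Category.comp_id]
  assoc := by
    apply hom_ext (hT _ (hT _ (Lf.unit_isEquiv X.A))) (L_obj_local Lf X.A)
    have fac := extend_fac (hT _ (Lf.unit_isEquiv X.A)) (L_obj_local Lf X.A)
      (X.a ≫ Lf.l.app X.A)
    have natμ : T.map (T.map (Lf.l.app X.A)) ≫ T.μ.app (Lf.L.obj X.A) =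
        T.μ.app X.A ≫ T.map (Lf.l.app X.A) := by
      simpa using T.μ.naturality (Lf.l.app X.A)
    have h1 : T.map (T.map (Lf.l.app X.A)) ≫
        T.map (extendAlong (hT _ (Lf.unit_isEquiv X.A)) (L_obj_local Lf X.A)
          (X.a ≫ Lf.l.app X.A)) ≫
        extendAlong (hT _ (Lf.unit_isEquiv X.A)) (L_obj_local Lf X.A) (X.a ≫ Lf.l.app X.A) =
        T.map X.a ≫ X.a ≫ Lf.l.app X.A := by
      rw [← Functor.map_comp_assoc, fac, Functor.map_comp_assoc, fac]
    have h2 : T.map (T.map (Lf.l.app X.A)) ≫ T.μ.app (Lf.L.obj X.A) ≫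
        extendAlong (hT _ (Lf.unit_isEquiv X.A)) (L_obj_local Lf X.A) (X.a ≫ Lf.l.app X.A) =
        T.μ.app X.A ≫ X.a ≫ Lf.l.app X.A := by
      rw [← Category.assoc, natμ, Category.assoc, fac]
    rw [h1, h2, ← Category.assoc, ← Category.assoc, X.assoc]
noncomputable def liftedL : T.Algebra ⥤ T.Algebra where
  obj X := liftedAlg T Lf hT X
  map {X Y} h :=
    { f := Lf.L.map h.f
      h := by
        apply hom_ext (hT _ (Lf.unit_isEquiv X.A)) (L_obj_local Lf Y.A)
        have facX := extend_fac (hT _ (Lf.unit_isEquiv X.A)) (L_obj_local Lf X.A)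
          (X.a ≫ Lf.l.app X.A)
        have facY := extend_fac (hT _ (Lf.unit_isEquiv Y.A)) (L_obj_local Lf Y.A)
          (Y.a ≫ Lf.l.app Y.A)
        have natl : Lf.l.app X.A ≫ Lf.L.map h.f = h.f ≫ Lf.l.app Y.A := by
          simpa using (Lf.l.naturality h.f).symm
        have facX' : T.map (Lf.l.app X.A) ≫ (liftedAlg T Lf hT X).a =
            X.a ≫ Lf.l.app X.A := facX
        have facY' : T.map (Lf.l.app Y.A) ≫ (liftedAlg T Lf hT Y).a =
            Y.a ≫ Lf.l.app Y.A := facY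
        have e1 : T.map (Lf.l.app X.A) ≫ T.map (Lf.L.map h.f) ≫ (liftedAlg T Lf hT Y).a =
            X.a ≫ h.f ≫ Lf.l.app Y.A := by
          rw [← Functor.map_comp_assoc, natl, Functor.map_comp_assoc, facY',
            Monad.Algebra.Hom.h_assoc]
        have e2 : T.map (Lf.l.app X.A) ≫ (liftedAlg T Lf hT X).a ≫ Lf.L.map h.f =
            X.a ≫ h.f ≫ Lf.l.app Y.A := by
          rw [← Category.assoc, facX', Category.assoc, natl]
        rw [e1, e2] }
  map_id X := by
    ext
    show Lf.L.map (𝟙 X.A) = _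
    simp
  map_comp h k := by
    ext
    simp

noncomputable def liftedUnit : 𝟭 T.Algebra ⟶ liftedL T Lf hT where
  app X :=
    { f := Lf.l.app X.A
      h := extend_fac (hT _ (Lf.unit_isEquiv X.A)) (L_obj_local Lf X.A)
        (X.a ≫ Lf.l.app X.A) }
  naturality X Y h := by
    ext
    show h.f ≫ Lf.l.app Y.A = Lf.l.app X.A ≫ Lf.L.map h.f
    simpa using Lf.l.naturality h.f

noncomputable def liftedFLoc : FLocalization (T.free.map f) where
  L := liftedL T Lf hT
  l := liftedUnit T Lf hT
  coincide X := by
    ext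
    exact Lf.coincide X.A
  isIso X := by
    have : IsIso (((liftedL T Lf hT).map ((liftedUnit T Lf hT).app X)).f) := by
      show IsIso (Lf.L.map (Lf.l.app X.A))
      exact Lf.isIso X.A
    exact T.algebra_iso_of_iso _
  local_iff X := by
    rw [localWrt_free_iff]
    constructor
    · intro h
      have : IsIso (T.forget.map ((liftedUnit T Lf hT).app X)) := inferInstance
      exact (Lf.local_iff X.A).mp this
    · intro h
      have : IsIso (((liftedUnit T Lf hT).app X).f) := (Lf.local_iff X.A).mpr h
      exact T.algebra_iso_of_iso _
  unit_isEquiv X Z hZ := by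
    have hZA : IsLocalWrt f Z.A := (localWrt_free_iff T Z).mp hZ
    constructor
    · intro p q hpq
      ext
      apply hom_ext (Lf.unit_isEquiv X.A) hZA
      have := congrArg Monad.Algebra.Hom.f hpq
      exact this
    · intro h
      refine ⟨{ f := extendAlong (Lf.unit_isEquiv X.A) hZA h.f, h := ?_ }, ?_⟩
      · have fac := extend_fac (Lf.unit_isEquiv X.A) hZA h.f
        have facX' : T.map (Lf.l.app X.A) ≫ (liftedAlg T Lf hT X).a =
            X.a ≫ Lf.l.app X.A :=
          extend_fac (hT _ (Lf.unit_isEquiv X.A)) (L_obj_local Lf X.A)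
            (X.a ≫ Lf.l.app X.A)
        show T.map (extendAlong (Lf.unit_isEquiv X.A) hZA h.f) ≫ Z.a =
          (liftedAlg T Lf hT X).a ≫ extendAlong (Lf.unit_isEquiv X.A) hZA h.f
        apply hom_ext (hT _ (Lf.unit_isEquiv X.A)) hZA
        have e1 : T.map (Lf.l.app X.A) ≫
            T.map (extendAlong (Lf.unit_isEquiv X.A) hZA h.f) ≫ Z.a = X.a ≫ h.f := by
          rw [← Functor.map_comp_assoc, fac, h.h]
          rfl
        have e2 : T.map (Lf.l.app X.A) ≫ (liftedAlg T Lf hT X).a ≫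
            extendAlong (Lf.unit_isEquiv X.A) hZA h.f = X.a ≫ h.f := by
          rw [← Category.assoc, facX', Category.assoc, fac]
        rw [e1, e2]
      · ext
        exact extend_fac (Lf.unit_isEquiv X.A) hZA h.f

end Construction

end FLocProof

/-- For a monad `T` on `C` with Eilenberg–Moore adjunction
`F : C ⇄ C^T : U` and a morphism `f` admitting an `f`-localization `L_f` on `C`, an
`F f`-localization on `C^T` with `L_f ∘ U ≅ U ∘ L_{F f}` exists if and only if `T` preserves
`f`-equivalences. -/
theorem f_localization_lifts_to_algebras_iff_monad_preserves_f_equivalences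
    {C : Type*} [Category C] (T : Monad C)
    {A B : C} (f : A ⟶ B) (Lf : FLocalization f) :
    (∃ LFf : FLocalization (T.free.map f),
      Nonempty (T.forget ⋙ Lf.L ≅ LFf.L ⋙ T.forget)) ↔
    (∀ ⦃U V : C⦄ (g : U ⟶ V), IsEquivWrt f g → IsEquivWrt f (T.map g)) := by
  constructor
  · rintro ⟨LFf, ⟨φ⟩⟩ U V g hg
    rw [FLocProof.isEquiv_iff_isIso_L_map Lf]
    have h1 : IsEquivWrt (T.free.map f) (T.free.map g) := FLocProof.free_map_isEquiv T g hg
    haveI h2 : IsIso (LFf.L.map (T.free.map g)) :=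
      (FLocProof.isEquiv_iff_isIso_L_map LFf (T.free.map g)).mp h1
    have h3 := φ.hom.naturality (T.free.map g)
    have h5 : Lf.L.map (T.map g) ≫ φ.hom.app (T.free.obj V) =
        φ.hom.app (T.free.obj U) ≫ T.forget.map (LFf.L.map (T.free.map g)) := by
      exact h3
    have h6 : Lf.L.map (T.map g) =
        (φ.hom.app (T.free.obj U) ≫ T.forget.map (LFf.L.map (T.free.map g))) ≫
          φ.inv.app (T.free.obj V) := by
      rw [← h5]
      erw [Category.assoc, Iso.hom_inv_id_app, Category.comp_id]
    rw [h6]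
    exact IsIso.comp_isIso' (IsIso.comp_isIso' (φ.app (T.free.obj U)).isIso_hom inferInstance)
      (φ.app (T.free.obj V)).isIso_inv
  · intro hT
    refine ⟨FLocProof.liftedFLoc T Lf hT,
      ⟨NatIso.ofComponents (fun X => Iso.refl _) (fun {X Y} h => ?_)⟩⟩
    show Lf.L.map h.f ≫ 𝟙 _ = 𝟙 _ ≫ ((FLocProof.liftedL T Lf hT).map h).f
    simp
    rfl
end

section
/- Let F : C₁ → C₂ be a functor, let (C₁', c₁) be a colocalization on C₁ and (C₂', c₂) a colocalization on C₂. Then: (i) F preserves colocal objects if and only if there is a natural transformation α : F ∘ C₁' → C₂' ∘ F such that (c₂)_{FX} ∘ α_X = F((c₁)_X) for every X; such α is unique, and α is a natural isomorphism if and only if F preserves equivalences. (ii) F preserves equivalences if and only if there is a natural transformation β : C₂' ∘ F → F ∘ C₁' such that F((c₁)_X) ∘ β_X = (c₂)_{FX} for every X and each β_X is a C₂'-equivalence; such β is unique, and β is a natural isomorphism if and only if F preserves colocal objects. -/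
open CategoryTheory

/-- A colocalization (coreflection) on a category `C`: a functor `K : C ⥤ C` with a natural
transformation `c : K ⟶ 𝟭 C` such that `K (c X) = c (K X)` and these morphisms are
isomorphisms. -/
structure ColocalizationData (C : Type*) [Category C] where
  /-- the colocalization functor -/
  K : C ⥤ C
  /-- the counit -/
  c : K ⟶ 𝟭 C
  coincide : ∀ X : C, K.map (c.app X) = c.app (K.obj X)
  isIso : ∀ X : C, IsIso (K.map (c.app X))

/-- An object `X` is colocal if `c X : K X ⟶ X` is an isomorphism. -/
def ColocalizationData.IsColocal {C : Type*} [Category C] (Γ : ColocalizationData C)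
    (X : C) : Prop :=
  IsIso (Γ.c.app X)

/-- A morphism `g` is an equivalence if `K g` is an isomorphism. -/
def ColocalizationData.IsEquiv {C : Type*} [Category C] (Γ : ColocalizationData C)
    {X Y : C} (g : X ⟶ Y) : Prop :=
  IsIso (Γ.K.map g)

namespace ColocalizationData

variable {C : Type*} [Category C] (Γ : ColocalizationData C)

lemma isColocal_K (X : C) : Γ.IsColocal (Γ.K.obj X) := by
  unfold IsColocal
  rw [← Γ.coincide X]
  exact Γ.isIso X

lemma eq_of_K_map_eq {A B : C} (hA : Γ.IsColocal A) {g g' : A ⟶ B}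
    (h : Γ.K.map g = Γ.K.map g') : g = g' := by
  haveI : IsIso (Γ.c.app A) := hA
  have n := Γ.c.naturality g
  have n' := Γ.c.naturality g'
  simp only [Functor.id_map] at n n'
  rw [← cancel_epi (Γ.c.app A), ← n, ← n', h]

lemma hom_ext {A X : C} (hA : Γ.IsColocal A) {g g' : A ⟶ Γ.K.obj X}
    (h : g ≫ Γ.c.app X = g' ≫ Γ.c.app X) : g = g' := by
  haveI : IsIso (Γ.K.map (Γ.c.app X)) := Γ.isIso X
  apply Γ.eq_of_K_map_eq hA
  rw [← cancel_mono (Γ.K.map (Γ.c.app X)), ← Functor.map_comp, ← Functor.map_comp, h]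

lemma isIso_of_isEquiv {A B : C} (hA : Γ.IsColocal A) (hB : Γ.IsColocal B)
    {g : A ⟶ B} (hg : Γ.IsEquiv g) : IsIso g := by
  haveI : IsIso (Γ.c.app A) := hA
  haveI : IsIso (Γ.c.app B) := hB
  haveI : IsIso (Γ.K.map g) := hg
  have n := Γ.c.naturality g
  simp only [Functor.id_map] at n
  have hg' : g = inv (Γ.c.app A) ≫ Γ.K.map g ≫ Γ.c.app B := by
    rw [n, IsIso.inv_hom_id_assoc]
  rw [hg']
  infer_instance

lemma isEquiv_of_K_K {X Y : C} {g : X ⟶ Y}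
    (h : IsIso (Γ.K.map (Γ.K.map g))) : IsIso (Γ.K.map g) :=
  Γ.isIso_of_isEquiv (Γ.isColocal_K X) (Γ.isColocal_K Y) h

end ColocalizationData

section Comparison

variable {C₁ C₂ : Type*} [Category C₁] [Category C₂] (F : C₁ ⥤ C₂)
  (Γ₁ : ColocalizationData C₁) (Γ₂ : ColocalizationData C₂)

/-- Existence of `α` when `F` preserves colocal objects. -/
lemma exists_alpha (hcol : ∀ X : C₁, Γ₁.IsColocal X → Γ₂.IsColocal (F.obj X)) :
    ∃ α : Γ₁.K ⋙ F ⟶ F ⋙ Γ₂.K,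
      ∀ X : C₁, α.app X ≫ Γ₂.c.app (F.obj X) = F.map (Γ₁.c.app X) := by
  have hc : ∀ X : C₁, IsIso (Γ₂.c.app (F.obj (Γ₁.K.obj X))) :=
    fun X => hcol _ (Γ₁.isColocal_K X)
  have key : ∀ X : C₁, (@inv _ _ _ _ (Γ₂.c.app (F.obj (Γ₁.K.obj X))) (hc X) ≫
      Γ₂.K.map (F.map (Γ₁.c.app X))) ≫ Γ₂.c.app (F.obj X) = F.map (Γ₁.c.app X) := by
    intro X
    haveI := hc X
    have n := Γ₂.c.naturality (F.map (Γ₁.c.app X))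
    simp only [Functor.id_map, Functor.id_obj] at n
    rw [Category.assoc, n, IsIso.inv_hom_id_assoc]
  refine ⟨⟨fun X => @inv _ _ _ _ (Γ₂.c.app (F.obj (Γ₁.K.obj X))) (hc X) ≫
      Γ₂.K.map (F.map (Γ₁.c.app X)), ?_⟩, key⟩
  intro X Y g
  apply Γ₂.hom_ext (hcol _ (Γ₁.isColocal_K X))
  have nY := Γ₂.c.naturality (F.map g)
  simp only [Functor.id_map, Functor.id_obj] at nY
  simp only [Functor.comp_map, Category.assoc]
  rw [nY]
  have keyY := key Y
  rw [Category.assoc] at keyY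
  rw [keyY]
  have keyX := key X
  rw [Category.assoc] at keyX
  rw [reassoc_of% keyX, ← F.map_comp, ← F.map_comp]
  congr 1
  have n₁ := Γ₁.c.naturality g
  simp only [Functor.id_map, Functor.id_obj] at n₁
  exact n₁

/-- `F` preserves colocal objects given `α`. -/
lemma colocal_of_alpha (α : Γ₁.K ⋙ F ⟶ F ⋙ Γ₂.K)
    (hα : ∀ X : C₁, α.app X ≫ Γ₂.c.app (F.obj X) = F.map (Γ₁.c.app X)) :
    ∀ X : C₁, Γ₁.IsColocal X → Γ₂.IsColocal (F.obj X) := by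
  intro X hX
  haveI : IsIso (Γ₁.c.app X) := hX
  haveI : IsIso (F.map (Γ₁.c.app X)) := inferInstance
  set s : F.obj X ⟶ Γ₂.K.obj (F.obj X) := inv (F.map (Γ₁.c.app X)) ≫ α.app X with hs
  have hsc : s ≫ Γ₂.c.app (F.obj X) = 𝟙 _ := by
    rw [hs, Category.assoc, hα, IsIso.inv_hom_id]
  have hcs : Γ₂.c.app (F.obj X) ≫ s = 𝟙 _ := by
    apply Γ₂.eq_of_K_map_eq (Γ₂.isColocal_K (F.obj X))
    haveI : IsIso (Γ₂.K.map (Γ₂.c.app (F.obj X))) := Γ₂.isIso _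
    have h1 := congrArg Γ₂.K.map hsc
    rw [Γ₂.K.map_comp, Γ₂.K.map_id] at h1
    rw [Γ₂.K.map_comp, Γ₂.K.map_id]
    have h2 : Γ₂.K.map s = inv (Γ₂.K.map (Γ₂.c.app (F.obj X))) :=
      IsIso.eq_inv_of_inv_hom_id h1
    rw [h2, IsIso.hom_inv_id]
  exact ⟨s, hcs, hsc⟩

lemma alpha_unique (α α' : Γ₁.K ⋙ F ⟶ F ⋙ Γ₂.K)
    (hα : ∀ X : C₁, α.app X ≫ Γ₂.c.app (F.obj X) = F.map (Γ₁.c.app X))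
    (hα' : ∀ X : C₁, α'.app X ≫ Γ₂.c.app (F.obj X) = F.map (Γ₁.c.app X)) : α = α' := by
  have hcol := colocal_of_alpha F Γ₁ Γ₂ α hα
  ext X
  exact Γ₂.hom_ext (hcol _ (Γ₁.isColocal_K X)) ((hα X).trans (hα' X).symm)

lemma equiv_of_alpha_iso (α : Γ₁.K ⋙ F ⟶ F ⋙ Γ₂.K)
    (hiso : IsIso α) {X Y : C₁} (g : X ⟶ Y) (hg : Γ₁.IsEquiv g) :
    Γ₂.IsEquiv (F.map g) := by
  haveI := hiso
  haveI : IsIso (Γ₁.K.map g) := hg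
  have n := α.naturality g
  simp only [Functor.comp_map] at n
  have h1 : Γ₂.K.map (F.map g) = inv (α.app X) ≫ F.map (Γ₁.K.map g) ≫ α.app Y := by
    rw [n, IsIso.inv_hom_id_assoc]
  show IsIso (Γ₂.K.map (F.map g))
  rw [h1]
  infer_instance

lemma alpha_iso_of_equiv (α : Γ₁.K ⋙ F ⟶ F ⋙ Γ₂.K)
    (hα : ∀ X : C₁, α.app X ≫ Γ₂.c.app (F.obj X) = F.map (Γ₁.c.app X))
    (hpres : ∀ ⦃X Y : C₁⦄ (g : X ⟶ Y), Γ₁.IsEquiv g → Γ₂.IsEquiv (F.map g)) :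
    IsIso α := by
  have hcol := colocal_of_alpha F Γ₁ Γ₂ α hα
  haveI : ∀ X : C₁, IsIso (α.app X) := by
    intro X
    apply Γ₂.isIso_of_isEquiv (hcol _ (Γ₁.isColocal_K X)) (Γ₂.isColocal_K (F.obj X))
    haveI : IsIso (Γ₂.K.map (F.map (Γ₁.c.app X))) := hpres _ (Γ₁.isIso X)
    haveI : IsIso (Γ₂.K.map (Γ₂.c.app (F.obj X))) := Γ₂.isIso _
    have h0 := congrArg Γ₂.K.map (hα X)
    rw [Γ₂.K.map_comp] at h0
    have h2 : Γ₂.K.map (α.app X) =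
        Γ₂.K.map (F.map (Γ₁.c.app X)) ≫ inv (Γ₂.K.map (Γ₂.c.app (F.obj X))) := by
      rw [← h0, Category.assoc, IsIso.hom_inv_id, Category.comp_id]
    show IsIso (Γ₂.K.map (α.app X))
    rw [h2]
    infer_instance
  exact NatIso.isIso_of_isIso_app α

/-- Existence of `β` when `F` preserves equivalences. -/
lemma exists_beta
    (hpres : ∀ ⦃X Y : C₁⦄ (g : X ⟶ Y), Γ₁.IsEquiv g → Γ₂.IsEquiv (F.map g)) :
    ∃ β : F ⋙ Γ₂.K ⟶ Γ₁.K ⋙ F,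
      (∀ X : C₁, β.app X ≫ F.map (Γ₁.c.app X) = Γ₂.c.app (F.obj X)) ∧
      ∀ X : C₁, Γ₂.IsEquiv (β.app X) := by
  have hi : ∀ X : C₁, IsIso (Γ₂.K.map (F.map (Γ₁.c.app X))) :=
    fun X => hpres _ (Γ₁.isIso X)
  refine ⟨⟨fun X => @inv _ _ _ _ (Γ₂.K.map (F.map (Γ₁.c.app X))) (hi X) ≫
      Γ₂.c.app (F.obj (Γ₁.K.obj X)), ?_⟩, ?_, ?_⟩
  · intro X Y g
    haveI := hi X; haveI := hi Y
    simp only [Functor.comp_map]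
    have n := Γ₂.c.naturality (F.map (Γ₁.K.map g))
    simp only [Functor.id_map, Functor.id_obj] at n
    rw [Category.assoc, ← n, ← Category.assoc, ← Category.assoc]
    congr 1
    rw [IsIso.comp_inv_eq, Category.assoc, IsIso.eq_inv_comp, ← Γ₂.K.map_comp,
      ← F.map_comp, ← Γ₂.K.map_comp, ← F.map_comp]
    have n₁ := Γ₁.c.naturality g
    simp only [Functor.id_map, Functor.id_obj] at n₁
    rw [← n₁]
  · intro X
    haveI := hi X
    have n := Γ₂.c.naturality (F.map (Γ₁.c.app X))
    simp only [Functor.id_map, Functor.id_obj] at n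
    dsimp only
    rw [Category.assoc, ← n, IsIso.inv_hom_id_assoc]
  · intro X
    haveI := hi X
    haveI : IsIso (Γ₂.K.map (Γ₂.c.app (F.obj (Γ₁.K.obj X)))) := Γ₂.isIso _
    show IsIso (Γ₂.K.map (inv (Γ₂.K.map (F.map (Γ₁.c.app X))) ≫
      Γ₂.c.app (F.obj (Γ₁.K.obj X))))
    rw [Γ₂.K.map_comp]
    infer_instance

/-- `F` preserves equivalences given `β`. -/
lemma equiv_of_beta (β : F ⋙ Γ₂.K ⟶ Γ₁.K ⋙ F)
    (heq : ∀ X : C₁, Γ₂.IsEquiv (β.app X)) :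
    ∀ ⦃X Y : C₁⦄ (g : X ⟶ Y), Γ₁.IsEquiv g → Γ₂.IsEquiv (F.map g) := by
  intro X Y g hg
  haveI : IsIso (Γ₁.K.map g) := hg
  haveI : IsIso (Γ₂.K.map (β.app X)) := heq X
  haveI : IsIso (Γ₂.K.map (β.app Y)) := heq Y
  have n := β.naturality g
  simp only [Functor.comp_map] at n
  have n2 := congrArg Γ₂.K.map n
  rw [Γ₂.K.map_comp, Γ₂.K.map_comp] at n2
  apply Γ₂.isEquiv_of_K_K
  have h1 : Γ₂.K.map (Γ₂.K.map (F.map g)) =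
      Γ₂.K.map (β.app X) ≫ Γ₂.K.map (F.map (Γ₁.K.map g)) ≫ inv (Γ₂.K.map (β.app Y)) := by
    rw [← Category.assoc, ← n2, Category.assoc, IsIso.hom_inv_id, Category.comp_id]
  rw [h1]
  infer_instance

lemma beta_unique (β β' : F ⋙ Γ₂.K ⟶ Γ₁.K ⋙ F)
    (hβ : ∀ X : C₁, β.app X ≫ F.map (Γ₁.c.app X) = Γ₂.c.app (F.obj X))
    (heq : ∀ X : C₁, Γ₂.IsEquiv (β.app X))
    (hβ' : ∀ X : C₁, β'.app X ≫ F.map (Γ₁.c.app X) = Γ₂.c.app (F.obj X)) : β = β' := by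
  have hpres := equiv_of_beta F Γ₁ Γ₂ β heq
  ext X
  apply Γ₂.eq_of_K_map_eq (Γ₂.isColocal_K (F.obj X))
  haveI : IsIso (Γ₂.K.map (F.map (Γ₁.c.app X))) := hpres _ (Γ₁.isIso X)
  rw [← cancel_mono (Γ₂.K.map (F.map (Γ₁.c.app X))), ← Γ₂.K.map_comp,
    ← Γ₂.K.map_comp, hβ X, hβ' X]

lemma colocal_of_beta_iso (β : F ⋙ Γ₂.K ⟶ Γ₁.K ⋙ F)
    (hβ : ∀ X : C₁, β.app X ≫ F.map (Γ₁.c.app X) = Γ₂.c.app (F.obj X))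
    (hiso : IsIso β) (X : C₁) (hX : Γ₁.IsColocal X) : Γ₂.IsColocal (F.obj X) := by
  haveI := hiso
  haveI : IsIso (Γ₁.c.app X) := hX
  show IsIso (Γ₂.c.app (F.obj X))
  rw [← hβ X]
  infer_instance

lemma beta_iso_of_colocal (β : F ⋙ Γ₂.K ⟶ Γ₁.K ⋙ F)
    (heq : ∀ X : C₁, Γ₂.IsEquiv (β.app X))
    (hcol : ∀ X : C₁, Γ₁.IsColocal X → Γ₂.IsColocal (F.obj X)) : IsIso β := by
  haveI : ∀ X : C₁, IsIso (β.app X) := fun X =>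
    Γ₂.isIso_of_isEquiv (Γ₂.isColocal_K (F.obj X)) (hcol _ (Γ₁.isColocal_K X)) (heq X)
  exact NatIso.isIso_of_isIso_app β

end Comparison

/-- Dual comparison transformations for colocalizations: (i) `F` preserves
colocal objects iff there is a (unique) natural transformation `α : F ∘ C₁' ⟶ C₂' ∘ F` with
`(c₂)_{F X} ∘ α_X = F((c₁)_X)`, and such `α` is an isomorphism iff `F` preserves
equivalences; (ii) `F` preserves equivalences iff there is a (unique) natural transformation
`β : C₂' ∘ F ⟶ F ∘ C₁'` with `F((c₁)_X) ∘ β_X = (c₂)_{F X}` whose components are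
`C₂'`-equivalences, and such `β` is an isomorphism iff `F` preserves colocal objects. -/
theorem colocalization_comparison_transformations
    {C₁ C₂ : Type*} [Category C₁] [Category C₂] (F : C₁ ⥤ C₂)
    (Γ₁ : ColocalizationData C₁) (Γ₂ : ColocalizationData C₂) :
    -- (i)
    (((∀ X : C₁, Γ₁.IsColocal X → Γ₂.IsColocal (F.obj X)) ↔
        ∃ α : Γ₁.K ⋙ F ⟶ F ⋙ Γ₂.K,
          ∀ X : C₁, α.app X ≫ Γ₂.c.app (F.obj X) = F.map (Γ₁.c.app X)) ∧
      (∀ α α' : Γ₁.K ⋙ F ⟶ F ⋙ Γ₂.K,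
        (∀ X : C₁, α.app X ≫ Γ₂.c.app (F.obj X) = F.map (Γ₁.c.app X)) →
        (∀ X : C₁, α'.app X ≫ Γ₂.c.app (F.obj X) = F.map (Γ₁.c.app X)) → α = α') ∧
      (∀ α : Γ₁.K ⋙ F ⟶ F ⋙ Γ₂.K,
        (∀ X : C₁, α.app X ≫ Γ₂.c.app (F.obj X) = F.map (Γ₁.c.app X)) →
        (IsIso α ↔ ∀ ⦃X Y : C₁⦄ (g : X ⟶ Y), Γ₁.IsEquiv g → Γ₂.IsEquiv (F.map g)))) ∧
    -- (ii)
    (((∀ ⦃X Y : C₁⦄ (g : X ⟶ Y), Γ₁.IsEquiv g → Γ₂.IsEquiv (F.map g)) ↔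
        ∃ β : F ⋙ Γ₂.K ⟶ Γ₁.K ⋙ F,
          (∀ X : C₁, β.app X ≫ F.map (Γ₁.c.app X) = Γ₂.c.app (F.obj X)) ∧
          ∀ X : C₁, Γ₂.IsEquiv (β.app X)) ∧
      (∀ β β' : F ⋙ Γ₂.K ⟶ Γ₁.K ⋙ F,
        ((∀ X : C₁, β.app X ≫ F.map (Γ₁.c.app X) = Γ₂.c.app (F.obj X)) ∧
          ∀ X : C₁, Γ₂.IsEquiv (β.app X)) →
        ((∀ X : C₁, β'.app X ≫ F.map (Γ₁.c.app X) = Γ₂.c.app (F.obj X)) ∧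
          ∀ X : C₁, Γ₂.IsEquiv (β'.app X)) → β = β') ∧
      (∀ β : F ⋙ Γ₂.K ⟶ Γ₁.K ⋙ F,
        ((∀ X : C₁, β.app X ≫ F.map (Γ₁.c.app X) = Γ₂.c.app (F.obj X)) ∧
          ∀ X : C₁, Γ₂.IsEquiv (β.app X)) →
        (IsIso β ↔ ∀ X : C₁, Γ₁.IsColocal X → Γ₂.IsColocal (F.obj X)))) := by
  constructor
  · refine ⟨⟨fun h => exists_alpha F Γ₁ Γ₂ h, fun ⟨α, hα⟩ => colocal_of_alpha F Γ₁ Γ₂ α hα⟩,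
      fun α α' hα hα' => alpha_unique F Γ₁ Γ₂ α α' hα hα', fun α hα => ?_⟩
    exact ⟨fun hiso _ _ g hg => equiv_of_alpha_iso F Γ₁ Γ₂ α hiso g hg,
      fun hpres => alpha_iso_of_equiv F Γ₁ Γ₂ α hα hpres⟩
  · refine ⟨⟨fun h => exists_beta F Γ₁ Γ₂ h,
      fun ⟨β, hβ, heq⟩ => equiv_of_beta F Γ₁ Γ₂ β heq⟩,
      fun β β' ⟨hβ, heq⟩ ⟨hβ', heq'⟩ => beta_unique F Γ₁ Γ₂ β β' hβ heq hβ',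
      fun β ⟨hβ, heq⟩ => ?_⟩
    exact ⟨fun hiso X hX => colocal_of_beta_iso F Γ₁ Γ₂ β hβ hiso X hX,
      fun hcol => beta_iso_of_colocal F Γ₁ Γ₂ β heq hcol⟩
end

section
/- Let F : C₁ ⇄ C₂ : G be an adjunction and let A be an object of C₁. Then: (i) a morphism g in C₂ is an FA-equivalence if and only if Gg is an A-equivalence; (ii) F sends A-cellular objects to FA-cellular objects; (iii) if an A-cellularization functor (C_A, c) on C₁ and an FA-cellularization functor (C_{FA}, c') on C₂ exist, then there is a unique natural transformation α : F ∘ C_A → C_{FA} ∘ F with c'_{FX} ∘ α_X = F(c_X) for all X, and a unique natural transformation β : C_A ∘ G → G ∘ C_{FA} with G(c'_Y) ∘ β_Y = c_{GY} for all Y whose components are A-equivalences; moreover α is a natural isomorphism if and only if F sends A-equivalences to FA-equivalences, and β is a natural isomorphism if and only if G sends FA-cellular objects to A-cellular objects. -/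
open CategoryTheory

/-- A morphism `g : U ⟶ V` is an `A`-(cellular) equivalence if postcomposition with `g`
gives a bijection `C(A, U) → C(A, V)`. -/
def IsCellEquiv {C : Type*} [Category C] (A : C) {U V : C} (g : U ⟶ V) : Prop :=
  Function.Bijective (fun h : A ⟶ U => h ≫ g)

/-- An object `X` is `A`-cellular if it is co-orthogonal to every `A`-equivalence. -/
def IsCellular {C : Type*} [Category C] (A X : C) : Prop :=
  ∀ ⦃U V : C⦄ (g : U ⟶ V), IsCellEquiv A g → Function.Bijective (fun h : X ⟶ U => h ≫ g)

/-- An `A`-cellularization functor: a colocalization whose colocal objects (those `X` with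
`c_X` an isomorphism) are exactly the `A`-cellular objects, and whose counit components are
`A`-equivalences. -/
structure Cellularization {C : Type*} [Category C] (A : C)
    extends ColocalizationData C where
  colocal_iff : ∀ X : C, IsIso (c.app X) ↔ IsCellular A X
  counit_isEquiv : ∀ X : C, IsCellEquiv A (c.app X)

namespace CellAux

variable {C : Type*} [Category C]

lemma bij_comp {T U V W : C} {f : U ⟶ V} {g : V ⟶ W}
    (hf : Function.Bijective (fun h : T ⟶ U => h ≫ f))
    (hg : Function.Bijective (fun h : T ⟶ V => h ≫ g)) :
    Function.Bijective (fun h : T ⟶ U => h ≫ (f ≫ g)) := by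
  have key : (fun h : T ⟶ U => h ≫ (f ≫ g))
      = (fun h : T ⟶ V => h ≫ g) ∘ (fun h : T ⟶ U => h ≫ f) := by
    funext h; simp
  rw [key]; exact hg.comp hf

/-- cancel the second factor -/
lemma bij_cancel_right {T U V W : C} {f : U ⟶ V} {g : V ⟶ W}
    (hfg : Function.Bijective (fun h : T ⟶ U => h ≫ (f ≫ g)))
    (hg : Function.Bijective (fun h : T ⟶ V => h ≫ g)) :
    Function.Bijective (fun h : T ⟶ U => h ≫ f) := by
  have key : (fun h : T ⟶ U => h ≫ f)
      = (Equiv.ofBijective _ hg).symm ∘ (fun h : T ⟶ U => h ≫ (f ≫ g)) := by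
    funext h
    rw [Function.comp_apply, Equiv.eq_symm_apply, Equiv.ofBijective_apply, Category.assoc]
  rw [key]
  exact (Equiv.ofBijective _ hg).symm.bijective.comp hfg

/-- cancel the first factor -/
lemma bij_cancel_left {T U V W : C} {f : U ⟶ V} {g : V ⟶ W}
    (hfg : Function.Bijective (fun h : T ⟶ U => h ≫ (f ≫ g)))
    (hf : Function.Bijective (fun h : T ⟶ U => h ≫ f)) :
    Function.Bijective (fun h : T ⟶ V => h ≫ g) := by
  have key : (fun h : T ⟶ V => h ≫ g)
      = (fun h : T ⟶ U => h ≫ (f ≫ g)) ∘ (Equiv.ofBijective _ hf).symm := by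
    funext k
    have : ((Equiv.ofBijective _ hf).symm k) ≫ f = k :=
      (Equiv.ofBijective _ hf).apply_symm_apply k
    simp only [Function.comp_apply, ← Category.assoc, this]
  rw [key]
  exact hfg.comp (Equiv.ofBijective _ hf).symm.bijective

lemma bij_of_isIso {T U V : C} (f : U ⟶ V) [IsIso f] :
    Function.Bijective (fun h : T ⟶ U => h ≫ f) := by
  constructor
  · intro a b h
    simpa using h =≫ inv f
  · intro k
    exact ⟨k ≫ inv f, by simp⟩

lemma isIso_of_bij {W W' : C} {f : W ⟶ W'}
    (hW : Function.Bijective (fun h : W ⟶ W => h ≫ f))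
    (hW' : Function.Bijective (fun h : W' ⟶ W => h ≫ f)) : IsIso f := by
  obtain ⟨s, hs⟩ := hW'.surjective (𝟙 W')
  simp only at hs
  refine ⟨s, ?_, hs⟩
  apply hW.injective
  simp only [Category.assoc, hs, Category.comp_id, Category.id_comp]

lemma self_cellular (A : C) : IsCellular A A := fun _ _ _ hg => hg

lemma K_cellular {A : C} (CA : Cellularization A) (X : C) : IsCellular A (CA.K.obj X) := by
  rw [← CA.colocal_iff, ← CA.coincide]
  exact CA.isIso X

end CellAux

open CellAux in
theorem cellularization_comparison_for_adjunction
    {C₁ C₂ : Type*} [Category C₁] [Category C₂]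
    (F : C₁ ⥤ C₂) (G : C₂ ⥤ C₁) (adj : F ⊣ G) (A : C₁) :
    -- (i)
    (∀ ⦃U V : C₂⦄ (g : U ⟶ V), IsCellEquiv (F.obj A) g ↔ IsCellEquiv A (G.map g)) ∧
    -- (ii)
    (∀ X : C₁, IsCellular A X → IsCellular (F.obj A) (F.obj X)) ∧
    -- (iii)
    (∀ (CA : Cellularization A) (CFA : Cellularization (F.obj A)),
      (∃ α : CA.K ⋙ F ⟶ F ⋙ CFA.K,
        (∀ X : C₁, α.app X ≫ CFA.c.app (F.obj X) = F.map (CA.c.app X)) ∧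
        ∀ α' : CA.K ⋙ F ⟶ F ⋙ CFA.K,
          (∀ X : C₁, α'.app X ≫ CFA.c.app (F.obj X) = F.map (CA.c.app X)) → α' = α) ∧
      (∃ β : G ⋙ CA.K ⟶ CFA.K ⋙ G,
        (∀ Y : C₂, β.app Y ≫ G.map (CFA.c.app Y) = CA.c.app (G.obj Y)) ∧
        (∀ Y : C₂, IsCellEquiv A (β.app Y)) ∧
        ∀ β' : G ⋙ CA.K ⟶ CFA.K ⋙ G,
          ((∀ Y : C₂, β'.app Y ≫ G.map (CFA.c.app Y) = CA.c.app (G.obj Y)) ∧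
            ∀ Y : C₂, IsCellEquiv A (β'.app Y)) → β' = β) ∧
      (∀ α : CA.K ⋙ F ⟶ F ⋙ CFA.K,
        (∀ X : C₁, α.app X ≫ CFA.c.app (F.obj X) = F.map (CA.c.app X)) →
        (IsIso α ↔ ∀ ⦃U V : C₁⦄ (g : U ⟶ V),
          IsCellEquiv A g → IsCellEquiv (F.obj A) (F.map g))) ∧
      (∀ β : G ⋙ CA.K ⟶ CFA.K ⋙ G,
        (∀ Y : C₂, β.app Y ≫ G.map (CFA.c.app Y) = CA.c.app (G.obj Y)) →
        (IsIso β ↔ ∀ Y : C₂, IsCellular (F.obj A) Y → IsCellular A (G.obj Y)))) := by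
  -- Part (i)
  have parti : ∀ ⦃U V : C₂⦄ (g : U ⟶ V),
      IsCellEquiv (F.obj A) g ↔ IsCellEquiv A (G.map g) := by
    intro U V g
    have key : (fun h : A ⟶ G.obj U => h ≫ G.map g)
        = (adj.homEquiv A V) ∘ (fun h : F.obj A ⟶ U => h ≫ g) ∘ (adj.homEquiv A U).symm := by
      funext h
      simp only [Function.comp_apply]
      rw [Adjunction.homEquiv_naturality_right, Equiv.apply_symm_apply]
    have key2 : (fun h : F.obj A ⟶ U => h ≫ g)
        = (adj.homEquiv A V).symm ∘ (fun h : A ⟶ G.obj U => h ≫ G.map g)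
            ∘ (adj.homEquiv A U) := by
      funext h
      simp only [Function.comp_apply]
      rw [Equiv.eq_symm_apply, Adjunction.homEquiv_naturality_right]
    constructor
    · intro hg
      unfold IsCellEquiv
      rw [key]
      exact ((adj.homEquiv A V).bijective.comp hg).comp (adj.homEquiv A U).symm.bijective
    · intro hg
      unfold IsCellEquiv
      rw [key2]
      exact ((adj.homEquiv A V).symm.bijective.comp hg).comp (adj.homEquiv A U).bijective
  -- Part (ii)
  have partii : ∀ X : C₁, IsCellular A X → IsCellular (F.obj A) (F.obj X) := by
    intro X hX U V g hg
    have key2 : (fun h : F.obj X ⟶ U => h ≫ g)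
        = (adj.homEquiv X V).symm ∘ (fun h : X ⟶ G.obj U => h ≫ G.map g)
            ∘ (adj.homEquiv X U) := by
      funext h
      simp only [Function.comp_apply]
      rw [Equiv.eq_symm_apply, Adjunction.homEquiv_naturality_right]
    rw [key2]
    exact ((adj.homEquiv X V).symm.bijective.comp
      (hX (G.map g) ((parti g).mp hg))).comp (adj.homEquiv X U).bijective
  refine ⟨parti, partii, ?_⟩
  intro CA CFA
  have cellFA : IsCellular (F.obj A) (F.obj A) := self_cellular _
  have cellFK : ∀ X : C₁, IsCellular (F.obj A) (F.obj (CA.K.obj X)) :=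
    fun X => partii _ (K_cellular CA X)
  -- injectivity helpers
  have injA : ∀ {T : C₂}, IsCellular (F.obj A) T → ∀ (Y : C₂)
      {u v : T ⟶ CFA.K.obj Y}, u ≫ CFA.c.app Y = v ≫ CFA.c.app Y → u = v :=
    fun hT Y u v h => (hT _ (CFA.counit_isEquiv Y)).injective h
  have GcEquiv : ∀ Y : C₂, IsCellEquiv A (G.map (CFA.c.app Y)) :=
    fun Y => (parti _).mp (CFA.counit_isEquiv Y)
  have injB : ∀ {T : C₁}, IsCellular A T → ∀ (Y : C₂)
      {u v : T ⟶ G.obj (CFA.K.obj Y)},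
      u ≫ G.map (CFA.c.app Y) = v ≫ G.map (CFA.c.app Y) → u = v :=
    fun hT Y u v h => (hT _ (GcEquiv Y)).injective h
  -- construction of α
  have liftA : ∀ X : C₁, ∃ a : F.obj (CA.K.obj X) ⟶ CFA.K.obj (F.obj X),
      a ≫ CFA.c.app (F.obj X) = F.map (CA.c.app X) :=
    fun X => (cellFK X _ (CFA.counit_isEquiv (F.obj X))).surjective (F.map (CA.c.app X))
  choose a ha using liftA
  have anat : ∀ {X X' : C₁} (f : X ⟶ X'),
      F.map (CA.K.map f) ≫ a X' = a X ≫ CFA.K.map (F.map f) := by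
    intro X X' f
    apply injA (cellFK X) (F.obj X')
    rw [Category.assoc, ha X', Category.assoc, CFA.c.naturality, ← Category.assoc, ha X]
    simp only [Functor.id_map, ← F.map_comp]
    congr 1
    have := CA.c.naturality f
    simpa using this
  set α₀ : CA.K ⋙ F ⟶ F ⋙ CFA.K :=
    { app := a, naturality := fun X X' f => anat f } with hα₀
  -- construction of β
  have liftB : ∀ Y : C₂, ∃ b : CA.K.obj (G.obj Y) ⟶ G.obj (CFA.K.obj Y),
      b ≫ G.map (CFA.c.app Y) = CA.c.app (G.obj Y) :=
    fun Y => (K_cellular CA (G.obj Y) _ (GcEquiv Y)).surjective (CA.c.app (G.obj Y))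
  choose b hb using liftB
  have bnat : ∀ {Y Y' : C₂} (f : Y ⟶ Y'),
      CA.K.map (G.map f) ≫ b Y' = b Y ≫ G.map (CFA.K.map f) := by
    intro Y Y' f
    apply injB (K_cellular CA (G.obj Y)) Y'
    rw [Category.assoc, hb Y', Category.assoc, ← G.map_comp]
    have hc' : CFA.K.map f ≫ CFA.c.app Y' = CFA.c.app Y ≫ f := by
      simpa using CFA.c.naturality f
    rw [hc', G.map_comp, ← Category.assoc, hb Y]
    have := CA.c.naturality (G.map f)
    simpa using this
  set β₀ : G ⋙ CA.K ⟶ CFA.K ⋙ G :=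
    { app := b, naturality := fun Y Y' f => bnat f } with hβ₀
  have bequiv : ∀ Y : C₂, IsCellEquiv A (b Y) := by
    intro Y
    have hfg : Function.Bijective
        (fun h : A ⟶ CA.K.obj (G.obj Y) => h ≫ (b Y ≫ G.map (CFA.c.app Y))) := by
      rw [hb Y]; exact CA.counit_isEquiv (G.obj Y)
    exact bij_cancel_right hfg (GcEquiv Y)
  refine ⟨⟨α₀, ha, ?_⟩, ⟨β₀, hb, bequiv, ?_⟩, ?_, ?_⟩
  · -- uniqueness of α
    intro α' hα'
    ext X
    apply injA (cellFK X) (F.obj X)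
    rw [hα' X, ha X]
  · -- uniqueness of β
    intro β' ⟨hβ', _⟩
    ext Y
    apply injB (K_cellular CA (G.obj Y)) Y
    rw [hβ' Y, hb Y]
  · -- α iso criterion
    intro α hα
    constructor
    · intro hiso g₁ g₂ g hg
      -- K g is iso
      have bijKg : ∀ T : C₁, IsCellular A T →
          Function.Bijective (fun h : T ⟶ CA.K.obj g₁ => h ≫ CA.K.map g) := by
        intro T hT
        have hcomp : Function.Bijective
            (fun h : T ⟶ CA.K.obj g₁ => h ≫ (CA.K.map g ≫ CA.c.app g₂)) := by
          have hcnat : CA.K.map g ≫ CA.c.app g₂ = CA.c.app g₁ ≫ g := by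
            simpa using CA.c.naturality g
          rw [hcnat]
          exact bij_comp (hT _ (CA.counit_isEquiv g₁)) (hT _ hg)
        exact bij_cancel_right hcomp (hT _ (CA.counit_isEquiv g₂))
      have : IsIso (CA.K.map g) :=
        isIso_of_bij (bijKg _ (K_cellular CA g₁)) (bijKg _ (K_cellular CA g₂))
      have hFKg : IsIso (F.map (CA.K.map g)) := inferInstance
      -- transfer across α
      have hKFg : IsIso (CFA.K.map (F.map g)) := by
        have hnat := α.naturality g
        simp only [Functor.comp_map] at hnat
        haveI : IsIso (α.app g₁ ≫ CFA.K.map (F.map g)) := by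
          rw [← hnat]; infer_instance
        exact IsIso.of_isIso_comp_left (α.app g₁) (CFA.K.map (F.map g))
      -- conclude F g is an F A-equivalence
      have hcnat' : CFA.K.map (F.map g) ≫ CFA.c.app (F.obj g₂)
          = CFA.c.app (F.obj g₁) ≫ F.map g := by
        simpa using CFA.c.naturality (F.map g)
      have hcomp : Function.Bijective
          (fun h : F.obj A ⟶ CFA.K.obj (F.obj g₁) =>
            h ≫ (CFA.c.app (F.obj g₁) ≫ F.map g)) := by
        rw [← hcnat']
        exact bij_comp (bij_of_isIso _) (cellFA _ (CFA.counit_isEquiv (F.obj g₂)))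
      exact bij_cancel_left hcomp (cellFA _ (CFA.counit_isEquiv (F.obj g₁)))
    · intro hF
      have bijα : ∀ (X : C₁) (T : C₂), IsCellular (F.obj A) T →
          Function.Bijective (fun h : T ⟶ F.obj (CA.K.obj X) => h ≫ α.app X) := by
        intro X T hT
        have hcomp : Function.Bijective
            (fun h : T ⟶ F.obj (CA.K.obj X) =>
              h ≫ (α.app X ≫ CFA.c.app (F.obj X))) := by
          rw [hα X]
          exact hT _ (hF _ (CA.counit_isEquiv X))
        exact bij_cancel_right hcomp (hT _ (CFA.counit_isEquiv (F.obj X)))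
      have : ∀ X : C₁, IsIso (α.app X) := fun X =>
        isIso_of_bij (bijα X _ (cellFK X)) (bijα X _ (K_cellular CFA (F.obj X)))
      exact NatIso.isIso_of_isIso_app α
  · -- β iso criterion
    intro β hβ
    constructor
    · intro hiso Y hY
      have hc' : IsIso (CFA.c.app Y) := (CFA.colocal_iff Y).mpr hY
      have : IsIso (CA.c.app (G.obj Y)) := by
        rw [← hβ Y]
        infer_instance
      exact (CA.colocal_iff _).mp this
    · intro hG
      have bijβ : ∀ (Y : C₂) (T : C₁), IsCellular A T →
          Function.Bijective (fun h : T ⟶ CA.K.obj (G.obj Y) => h ≫ β.app Y) := by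
        intro Y T hT
        have hcomp : Function.Bijective
            (fun h : T ⟶ CA.K.obj (G.obj Y) =>
              h ≫ (β.app Y ≫ G.map (CFA.c.app Y))) := by
          rw [hβ Y]
          exact hT _ (CA.counit_isEquiv (G.obj Y))
        exact bij_cancel_right hcomp (hT _ (GcEquiv Y))
      have : ∀ Y : C₂, IsIso (β.app Y) := fun Y =>
        isIso_of_bij (bijβ Y _ (K_cellular CA (G.obj Y)))
          (bijβ Y _ (hG _ (K_cellular CFA Y)))
      exact NatIso.isIso_of_isIso_app β
end
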